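/- arXiv:2106.12294 — 6 statements merged into one kernel-verified Lean document; each statement's English description precedes it below -/
import Mathlib

section
/- Let (x,λ) be a solution of (PD-AVD) and let (z,μ) ∈ X × Y with Az = b. Then for every t ≥ t₀ one has d/dt E_{z,μ}(t) ≤ (2θ − 1)·θt·G_β(t | z,μ) − (βθt/2)·‖Ax(t) − b‖² − ξθt·‖(ẋ(t), λ̇(t))‖². -/
open Set MeasureTheory Filter Topology
open scoped RealInnerProductSpace ENNReal

/-- The augmented Lagrangian `L_β(x,λ) = f(x) + ⟪λ, Ax − b⟫ + (β/2)‖Ax − b‖²`. -/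
noncomputable def augLagrangian {X Y : Type*}
    [NormedAddCommGroup X] [InnerProductSpace ℝ X]
    [NormedAddCommGroup Y] [InnerProductSpace ℝ Y]
    (f : X → ℝ) (A : X →L[ℝ] Y) (b : Y) (β : ℝ) (u : X) (μ : Y) : ℝ :=
  f u + ⟪μ, A u - b⟫ + β / 2 * ‖A u - b‖ ^ 2

/-- The energy function `E_{z,μ}(t)` associated to a trajectory `(x,λ)` with velocities
`(x',λ')`, where the product norm on `X × Y` is the Hilbert norm
`‖(u,v)‖² = ‖u‖² + ‖v‖²` and `ξ = θα − θ − 1`. -/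
noncomputable def pdEnergy {X Y : Type*}
    [NormedAddCommGroup X] [InnerProductSpace ℝ X]
    [NormedAddCommGroup Y] [InnerProductSpace ℝ Y]
    (f : X → ℝ) (A : X →L[ℝ] Y) (b : Y) (α β θ : ℝ)
    (x : ℝ → X) (x' : ℝ → X) (l : ℝ → Y) (l' : ℝ → Y)
    (z : X) (μ : Y) (t : ℝ) : ℝ :=
  θ ^ 2 * t ^ 2 *
      (augLagrangian f A b β (x t) μ - augLagrangian f A b β z (l t))
    + 1 / 2 * (‖x t - z + (θ * t) • x' t‖ ^ 2 + ‖l t - μ + (θ * t) • l' t‖ ^ 2)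
    + (θ * α - θ - 1) / 2 * (‖x t - z‖ ^ 2 + ‖l t - μ‖ ^ 2)

lemma convex_grad_ineq {X : Type*} [NormedAddCommGroup X] [InnerProductSpace ℝ X] [CompleteSpace X]
    {f : X → ℝ} (hconv : ConvexOn ℝ univ f) {u g : X} (hg : HasGradientAt f g u) (w : X) :
    f u + ⟪g, w - u⟫ ≤ f w := by
  set φ : ℝ → ℝ := fun s => f (u + s • (w - u)) with hφ
  have hcurve : HasDerivAt (fun s : ℝ => u + s • (w - u)) (w - u) 0 := by
    simpa using ((hasDerivAt_id (0:ℝ)).smul_const (w - u)).const_add u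
  have hder : HasDerivAt φ ⟪g, w - u⟫ 0 := by
    have hg' : HasFDerivAt f ((InnerProductSpace.toDual ℝ X) g) (u + (0:ℝ) • (w - u)) := by
      simpa using hg.hasFDerivAt
    have := hg'.comp_hasDerivAt 0 hcurve
    simpa [hφ, InnerProductSpace.toDual_apply_apply, Function.comp_def] using this
  have hslope : ∀ s ∈ Ioo (0:ℝ) 1, slope φ 0 s ≤ f w - f u := by
    intro s hs
    have h1 : φ s ≤ (1 - s) * f u + s * f w := by
      have := hconv.2 (mem_univ u) (mem_univ w) (by linarith [hs.1, hs.2] : (0:ℝ) ≤ 1 - s)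
        (le_of_lt hs.1) (by ring)
      have heq : (1 - s) • u + s • w = u + s • (w - u) := by
        rw [smul_sub, sub_smul, one_smul]; abel
      simpa [heq, smul_eq_mul, hφ] using this
    have hφ0 : φ 0 = f u := by simp [hφ]
    have hs0 : (0:ℝ) < s := hs.1
    rw [slope_def_field, sub_zero, div_le_iff₀ hs0]
    nlinarith [h1, hφ0]
  have htend : Tendsto (slope φ 0) (𝓝[>] 0) (𝓝 ⟪g, w - u⟫) :=
    (hasDerivAt_iff_tendsto_slope.1 hder).mono_left
      (nhdsWithin_mono 0 (fun y hy => ne_of_gt hy))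
  have hle : ⟪g, w - u⟫ ≤ f w - f u := by
    refine le_of_tendsto htend ?_
    filter_upwards [Ioo_mem_nhdsGT_of_mem (by norm_num : (0:ℝ) ∈ Ico (0:ℝ) 1)] with s hs
    exact hslope s hs
  linarith

set_option maxHeartbeats 2000000 in
theorem stmt0
    {X Y : Type*}
    [NormedAddCommGroup X] [InnerProductSpace ℝ X] [CompleteSpace X]
    [NormedAddCommGroup Y] [InnerProductSpace ℝ Y] [CompleteSpace Y]
    (f : X → ℝ) (f' : X → X) (A : X →L[ℝ] Y) (b : Y)
    (hconv : ConvexOn ℝ univ f)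
    (hgrad : ∀ u, HasGradientAt f (f' u) u)
    (hf'cont : Continuous f')
    (t₀ α β θ : ℝ) (ht₀ : 0 < t₀) (hα : 3 ≤ α) (hβ : 0 ≤ β)
    (hθ1 : 1 / (α - 1) ≤ θ) (hθ2 : θ ≤ 1 / 2)
    (x : ℝ → X) (x' x'' : ℝ → X) (l : ℝ → Y) (l' l'' : ℝ → Y)
    (hx1 : ∀ t ∈ Ici t₀, HasDerivAt x (x' t) t)
    (hx2 : ∀ t ∈ Ici t₀, HasDerivAt x' (x'' t) t)
    (hx3 : ContinuousOn x'' (Ici t₀))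
    (hl1 : ∀ t ∈ Ici t₀, HasDerivAt l (l' t) t)
    (hl2 : ∀ t ∈ Ici t₀, HasDerivAt l' (l'' t) t)
    (hl3 : ContinuousOn l'' (Ici t₀))
    (hode1 : ∀ t ∈ Ici t₀, x'' t + (α / t) • x' t + f' (x t)
        + (ContinuousLinearMap.adjoint A) (l t + (θ * t) • l' t)
        + β • (ContinuousLinearMap.adjoint A) (A (x t) - b) = 0)
    (hode2 : ∀ t ∈ Ici t₀, l'' t + (α / t) • l' t
        - (A (x t + (θ * t) • x' t) - b) = 0)
    (z : X) (μ : Y) (hz : A z = b) :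
    ∀ t ∈ Ici t₀, ∃ d : ℝ,
      HasDerivAt (pdEnergy f A b α β θ x x' l l' z μ) d t ∧
      d ≤ (2 * θ - 1) * θ * t *
            (augLagrangian f A b β (x t) μ - augLagrangian f A b β z (l t))
          - β * θ * t / 2 * ‖A (x t) - b‖ ^ 2
          - (θ * α - θ - 1) * θ * t * (‖x' t‖ ^ 2 + ‖l' t‖ ^ 2) := by

  intro t ht
  have htpos : 0 < t := lt_of_lt_of_le ht₀ ht
  have ht0 : t ≠ 0 := ne_of_gt htpos
  have hθpos : 0 < θ := lt_of_lt_of_le (div_pos one_pos (by linarith) : (0:ℝ) < 1 / (α - 1)) hθ1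
  -- derivatives of the pieces
  have hx := hx1 t ht
  have hxx := hx2 t ht
  have hl := hl1 t ht
  have hll := hl2 t ht
  have hfx : HasDerivAt (fun s => f (x s)) ⟪f' (x t), x' t⟫ t := by
    have := (hgrad (x t)).hasFDerivAt.comp_hasDerivAt t hx
    simpa [InnerProductSpace.toDual_apply_apply, Function.comp_def] using this
  have hA : HasDerivAt (fun s => A (x s) - b) (A (x' t)) t :=
    (A.hasFDerivAt.comp_hasDerivAt t hx).sub_const b
  have hG : HasDerivAt
      (fun s => f (x s) + ⟪μ, A (x s) - b⟫ + β / 2 * ⟪A (x s) - b, A (x s) - b⟫ - f z)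
      (⟪f' (x t), x' t⟫ + (⟪μ, A (x' t)⟫ + ⟪(0:Y), A (x t) - b⟫)
        + β / 2 * (⟪A (x t) - b, A (x' t)⟫ + ⟪A (x' t), A (x t) - b⟫)) t :=
    ((hfx.add ((hasDerivAt_const t μ).inner (𝕜 := ℝ) hA)).add
      ((hA.inner (𝕜 := ℝ) hA).const_mul (β / 2))).sub_const (f z)
  have ht2 : HasDerivAt (fun s : ℝ => θ ^ 2 * s ^ 2) (θ ^ 2 * (2 * t ^ 1)) t :=
    (hasDerivAt_pow 2 t).const_mul (θ ^ 2)
  have hvx : HasDerivAt (fun s => x s - z + (θ * s) • x' s)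
      (x' t + ((θ * t) • x'' t + (θ * 1) • x' t)) t :=
    (hx.sub_const z).add (((hasDerivAt_id t).const_mul θ).smul hxx)
  have hvl : HasDerivAt (fun s => l s - μ + (θ * s) • l' s)
      (l' t + ((θ * t) • l'' t + (θ * 1) • l' t)) t :=
    (hl.sub_const μ).add (((hasDerivAt_id t).const_mul θ).smul hll)
  have hD := ((ht2.mul hG).add
      (((hvx.inner (𝕜 := ℝ) hvx).add (hvl.inner (𝕜 := ℝ) hvl)).const_mul (1 / 2 : ℝ))).add
    ((((hx.sub_const z).inner (𝕜 := ℝ) (hx.sub_const z)).add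
      ((hl.sub_const μ).inner (𝕜 := ℝ) (hl.sub_const μ))).const_mul ((θ * α - θ - 1) / 2))
  have heq : pdEnergy f A b α β θ x x' l l' z μ = fun s =>
      θ ^ 2 * s ^ 2 *
        (f (x s) + ⟪μ, A (x s) - b⟫ + β / 2 * ⟪A (x s) - b, A (x s) - b⟫ - f z)
      + 1 / 2 * (⟪x s - z + (θ * s) • x' s, x s - z + (θ * s) • x' s⟫
          + ⟪l s - μ + (θ * s) • l' s, l s - μ + (θ * s) • l' s⟫)
      + (θ * α - θ - 1) / 2 * (⟪x s - z, x s - z⟫ + ⟪l s - μ, l s - μ⟫) := by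
    funext s
    simp only [pdEnergy, augLagrangian, hz, sub_self, inner_zero_right, norm_zero,
      real_inner_self_eq_norm_sq]
    ring
  refine ⟨_, by rw [heq]; exact hD, ?_⟩
  -- rewrite the second derivatives using the ODEs
  have hxpp : x'' t = -((α / t) • x' t) - f' (x t)
      - (ContinuousLinearMap.adjoint A) (l t + (θ * t) • l' t)
      - β • (ContinuousLinearMap.adjoint A) (A (x t) - b) := by
    have h := hode1 t ht
    calc x'' t = (x'' t + (α / t) • x' t + f' (x t)
        + (ContinuousLinearMap.adjoint A) (l t + (θ * t) • l' t)
        + β • (ContinuousLinearMap.adjoint A) (A (x t) - b))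
        - ((α / t) • x' t) - f' (x t)
        - (ContinuousLinearMap.adjoint A) (l t + (θ * t) • l' t)
        - β • (ContinuousLinearMap.adjoint A) (A (x t) - b) := by abel
      _ = _ := by rw [h]; abel
  have hlpp : l'' t = -((α / t) • l' t) + (A (x t + (θ * t) • x' t) - b) := by
    have h := hode2 t ht
    calc l'' t = (l'' t + (α / t) • l' t - (A (x t + (θ * t) • x' t) - b))
        - (α / t) • l' t + (A (x t + (θ * t) • x' t) - b) := by abel
      _ = _ := by rw [h]; abel
  have hcv := convex_grad_ineq hconv (hgrad (x t)) z
  have hineq : θ * t * (f (x t) - f z - ⟪f' (x t), x t - z⟫) ≤ 0 := by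
    have h1 : ⟪f' (x t), z - x t⟫ = -⟪f' (x t), x t - z⟫ := by
      rw [show z - x t = -(x t - z) from (neg_sub _ _).symm, inner_neg_right]
    have h2 : f (x t) - f z - ⟪f' (x t), x t - z⟫ ≤ 0 := by rw [h1] at hcv; linarith
    exact mul_nonpos_of_nonneg_of_nonpos (by positivity) h2
  rw [hxpp, hlpp]
  refine le_trans (le_of_eq (?_ :
      _ = ((2 * θ - 1) * θ * t *
            (augLagrangian f A b β (x t) μ - augLagrangian f A b β z (l t))
          - β * θ * t / 2 * ‖A (x t) - b‖ ^ 2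
          - (θ * α - θ - 1) * θ * t * (‖x' t‖ ^ 2 + ‖l' t‖ ^ 2))
        + θ * t * (f (x t) - f z - ⟪f' (x t), x t - z⟫))) (by linarith [hineq])
  simp only [augLagrangian, hz, sub_self, inner_zero_right, norm_zero,
    ← real_inner_self_eq_norm_sq, map_add, map_sub, _root_.map_smul,
    inner_add_left, inner_add_right, inner_sub_left, inner_sub_right,
    inner_neg_left, inner_neg_right, real_inner_smul_left, real_inner_smul_right,
    ContinuousLinearMap.adjoint_inner_left, ContinuousLinearMap.adjoint_inner_right,
    inner_zero_left, inner_zero_right, smul_add, smul_sub]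
  field_simp
  ring_nf
  simp only [real_inner_comm]
  ring
end

section
/- Let (x,λ) be a solution of (PD-AVD) with α > 3 and 1/2 ≥ θ > 1/(α−1) (so ξ := θα − θ − 1 > 0), and let (x*,λ*) be a primal-dual optimal solution. Then for every t ≥ t₀ one has ‖(x(t),λ(t)) − (x*,λ*)‖² ≤ 2·E_{x*,λ*}(t₀)/ξ (so the trajectory is bounded) and t·‖(ẋ(t), λ̇(t))‖ ≤ (1/θ)·(1/√ξ + 1)·√(2·E_{x*,λ*}(t₀)); in particular ‖(ẋ(t), λ̇(t))‖ = O(1/t) as t → ∞. -/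
open Set MeasureTheory Filter Topology Asymptotics
open scoped RealInnerProductSpace ENNReal

set_option maxHeartbeats 1000000

lemma gradient_ineq {X : Type*} [NormedAddCommGroup X] [InnerProductSpace ℝ X] [CompleteSpace X]
    {f : X → ℝ} {f' : X → X} (hconv : ConvexOn ℝ univ f)
    (hgrad : ∀ u, HasGradientAt f (f' u) u) (u v : X) :
    ⟪f' u, v - u⟫ ≤ f v - f u := by
  have hline : ∀ s : ℝ, HasDerivAt (fun s : ℝ => f (u + s • (v - u)))
      ⟪f' (u + s • (v - u)), v - u⟫ s := by
    intro s
    have h1 : HasDerivAt (fun s : ℝ => u + s • (v - u)) (v - u) s := by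
      simpa using ((hasDerivAt_id s).smul_const (v - u)).const_add u
    have h2 := ((hgrad (u + s • (v - u))).hasFDerivAt).comp_hasDerivAt s h1
    simpa [InnerProductSpace.toDual_apply_apply, Function.comp_def] using h2
  have hφ : ConvexOn ℝ univ (fun s : ℝ => f (u + s • (v - u))) := by
    have h := hconv.comp_affineMap (AffineMap.lineMap u v : ℝ →ᵃ[ℝ] X)
    have he : (f ∘ (AffineMap.lineMap u v : ℝ →ᵃ[ℝ] X)) = fun s : ℝ => f (u + s • (v - u)) := by
      funext s; simp [AffineMap.lineMap_apply, add_comm]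
    rwa [Set.preimage_univ, he] at h
  have hs := hφ.le_slope_of_hasDerivAt (mem_univ (0:ℝ)) (mem_univ (1:ℝ)) one_pos (hline 0)
  simp [slope_def_field] at hs
  simpa using hs

lemma l2_triangle {X Y : Type*} [NormedAddCommGroup X] [InnerProductSpace ℝ X]
    [NormedAddCommGroup Y] [InnerProductSpace ℝ Y] (a c : X) (b d : Y) :
    Real.sqrt (‖a + c‖^2 + ‖b + d‖^2)
      ≤ Real.sqrt (‖a‖^2 + ‖b‖^2) + Real.sqrt (‖c‖^2 + ‖d‖^2) := by
  have h := norm_add_le ((WithLp.equiv 2 (X × Y)).symm (a, b))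
    ((WithLp.equiv 2 (X × Y)).symm (c, d))
  simpa [WithLp.prod_norm_eq_of_L2] using h

theorem stmt2
    {X Y : Type*}
    [NormedAddCommGroup X] [InnerProductSpace ℝ X] [CompleteSpace X]
    [NormedAddCommGroup Y] [InnerProductSpace ℝ Y] [CompleteSpace Y]
    (f : X → ℝ) (f' : X → X) (A : X →L[ℝ] Y) (b : Y)
    (hconv : ConvexOn ℝ univ f)
    (hgrad : ∀ u, HasGradientAt f (f' u) u)
    (hf'cont : Continuous f')
    (t₀ α β θ : ℝ) (ht₀ : 0 < t₀) (hα : 3 < α) (hβ : 0 ≤ β)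
    (hθ1 : 1 / (α - 1) < θ) (hθ2 : θ ≤ 1 / 2)
    (x : ℝ → X) (x' x'' : ℝ → X) (l : ℝ → Y) (l' l'' : ℝ → Y)
    (hx1 : ∀ t ∈ Ici t₀, HasDerivAt x (x' t) t)
    (hx2 : ∀ t ∈ Ici t₀, HasDerivAt x' (x'' t) t)
    (hx3 : ContinuousOn x'' (Ici t₀))
    (hl1 : ∀ t ∈ Ici t₀, HasDerivAt l (l' t) t)
    (hl2 : ∀ t ∈ Ici t₀, HasDerivAt l' (l'' t) t)
    (hl3 : ContinuousOn l'' (Ici t₀))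
    (hode1 : ∀ t ∈ Ici t₀, x'' t + (α / t) • x' t + f' (x t)
        + (ContinuousLinearMap.adjoint A) (l t + (θ * t) • l' t)
        + β • (ContinuousLinearMap.adjoint A) (A (x t) - b) = 0)
    (hode2 : ∀ t ∈ Ici t₀, l'' t + (α / t) • l' t
        - (A (x t + (θ * t) • x' t) - b) = 0)
    (xs : X) (ls : Y)
    (hopt1 : f' xs + (ContinuousLinearMap.adjoint A) ls = 0)
    (hopt2 : A xs = b)
    :
    ∀ t ∈ Ici t₀,
      ‖x t - xs‖ ^ 2 + ‖l t - ls‖ ^ 2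
          ≤ 2 * pdEnergy f A b α β θ x x' l l' xs ls t₀ / (θ * α - θ - 1) ∧
      t * Real.sqrt (‖x' t‖ ^ 2 + ‖l' t‖ ^ 2)
          ≤ 1 / θ * (1 / Real.sqrt (θ * α - θ - 1) + 1) *
            Real.sqrt (2 * pdEnergy f A b α β θ x x' l l' xs ls t₀) := by
  have hα1 : (0:ℝ) < α - 1 := by linarith
  have hθpos : 0 < θ := lt_trans (by positivity) hθ1
  obtain ⟨ξ, hξdef⟩ : ∃ ξ : ℝ, ξ = θ * α - θ - 1 := ⟨_, rfl⟩
  rw [← hξdef]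
  have hξpos : 0 < ξ := by
    have h := (div_lt_iff₀ hα1).mp hθ1
    nlinarith
  set Adj := ContinuousLinearMap.adjoint A with hAdj
  -- the Lagrangian gap
  obtain ⟨G, hGdef⟩ : ∃ G : ℝ → ℝ,
      G = fun t => f (x t) + ⟪ls, A (x t) - b⟫ + β / 2 * ‖A (x t) - b‖ ^ 2 - f xs := ⟨_, rfl⟩
  have hf'xs : f' xs = -(Adj ls) := by
    have := hopt1; rw [add_eq_zero_iff_eq_neg] at this; exact this
  have hAsub : ∀ u : X, A u - b = A (u - xs) := by
    intro u; rw [map_sub, hopt2]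
  have hGnonneg : ∀ t : ℝ, 0 ≤ G t := by
    intro t
    have h := gradient_ineq hconv hgrad xs (x t)
    rw [hf'xs, inner_neg_left, hAdj, ContinuousLinearMap.adjoint_inner_left, ← hAsub] at h
    have hn : 0 ≤ β / 2 * ‖A (x t) - b‖ ^ 2 := by positivity
    simp only [hGdef]; linarith
  have hGle : ∀ t : ℝ,
      G t ≤ ⟪f' (x t) + Adj ls + β • Adj (A (x t) - b), x t - xs⟫ := by
    intro t
    have h1 := gradient_ineq hconv hgrad (x t) xs
    have h1' : f (x t) - f xs ≤ ⟪f' (x t), x t - xs⟫ := by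
      have : ⟪f' (x t), xs - x t⟫ = -⟪f' (x t), x t - xs⟫ := by
        rw [← inner_neg_right]; rw [neg_sub]
      rw [this] at h1; linarith
    have h2 : ⟪ls, A (x t) - b⟫ = ⟪Adj ls, x t - xs⟫ := by
      rw [hAdj, ContinuousLinearMap.adjoint_inner_left, ← hAsub]
    have h3 : β / 2 * ‖A (x t) - b‖ ^ 2 ≤ ⟪β • Adj (A (x t) - b), x t - xs⟫ := by
      rw [real_inner_smul_left, hAdj, ContinuousLinearMap.adjoint_inner_left, ← hAsub,
        real_inner_self_eq_norm_sq]
      nlinarith [sq_nonneg ‖A (x t) - b‖]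
    rw [inner_add_left, inner_add_left]
    simp only [hGdef]; linarith
  -- the energy function
  obtain ⟨E, hEdef⟩ : ∃ E : ℝ → ℝ,
      E = fun t => pdEnergy f A b α β θ x x' l l' xs ls t := ⟨_, rfl⟩
  have hEeq : ∀ t : ℝ, E t = θ^2 * t^2 * G t
      + 1/2 * (‖x t - xs + (θ*t) • x' t‖^2 + ‖l t - ls + (θ*t) • l' t‖^2)
      + ξ/2 * (‖x t - xs‖^2 + ‖l t - ls‖^2) := by
    intro t
    simp only [hEdef, pdEnergy, augLagrangian, hGdef, hopt2, sub_self, inner_zero_right,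
      norm_zero, hξdef]
    ring
  -- derivative of the energy
  obtain ⟨D, hDdef⟩ : ∃ D : ℝ → ℝ, D = fun t =>
      θ^2 * (2*t) * G t
      + θ^2 * t^2 * (⟪f' (x t), x' t⟫ + ⟪ls, A (x' t)⟫ + β * ⟪A (x t) - b, A (x' t)⟫)
      + (⟪x t - xs + (θ*t) • x' t, x' t + (θ • x' t + (θ*t) • x'' t)⟫
         + ⟪l t - ls + (θ*t) • l' t, l' t + (θ • l' t + (θ*t) • l'' t)⟫)
      + ξ * (⟪x t - xs, x' t⟫ + ⟪l t - ls, l' t⟫) := ⟨_, rfl⟩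
  have hEfun : E = fun t => θ^2 * t^2 * G t
      + 1/2 * (‖x t - xs + (θ*t) • x' t‖^2 + ‖l t - ls + (θ*t) • l' t‖^2)
      + ξ/2 * (‖x t - xs‖^2 + ‖l t - ls‖^2) := funext hEeq
  have hEd : ∀ t ∈ Ici t₀, HasDerivAt E (D t) t := by
    intro t ht
    have hxd := hx1 t ht
    have hx'd := hx2 t ht
    have hld := hl1 t ht
    have hl'd := hl2 t ht
    have hc : HasDerivAt (fun s : ℝ => θ * s) θ t := by
      simpa using (hasDerivAt_id t).const_mul θ
    have hp : HasDerivAt (fun s => x s - xs + (θ*s) • x' s)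
        (x' t + (θ • x' t + (θ*t) • x'' t)) t :=
      (hxd.sub_const xs).add (by have h := hc.smul hx'd; rwa [add_comm] at h)
    have hq : HasDerivAt (fun s => l s - ls + (θ*s) • l' s)
        (l' t + (θ • l' t + (θ*t) • l'' t)) t :=
      (hld.sub_const ls).add (by have h := hc.smul hl'd; rwa [add_comm] at h)
    have hnp : HasDerivAt (fun s => ‖x s - xs + (θ*s) • x' s‖^2)
        (⟪x t - xs + (θ*t) • x' t, x' t + (θ • x' t + (θ*t) • x'' t)⟫
          + ⟪x' t + (θ • x' t + (θ*t) • x'' t), x t - xs + (θ*t) • x' t⟫) t := by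
      simpa only [real_inner_self_eq_norm_sq] using hp.inner ℝ hp
    have hnq : HasDerivAt (fun s => ‖l s - ls + (θ*s) • l' s‖^2)
        (⟪l t - ls + (θ*t) • l' t, l' t + (θ • l' t + (θ*t) • l'' t)⟫
          + ⟪l' t + (θ • l' t + (θ*t) • l'' t), l t - ls + (θ*t) • l' t⟫) t := by
      simpa only [real_inner_self_eq_norm_sq] using hq.inner ℝ hq
    have hnx : HasDerivAt (fun s => ‖x s - xs‖^2)
        (⟪x t - xs, x' t⟫ + ⟪x' t, x t - xs⟫) t := by
      simpa only [real_inner_self_eq_norm_sq] using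
        (hxd.sub_const xs).inner ℝ (hxd.sub_const xs)
    have hnl : HasDerivAt (fun s => ‖l s - ls‖^2)
        (⟪l t - ls, l' t⟫ + ⟪l' t, l t - ls⟫) t := by
      simpa only [real_inner_self_eq_norm_sq] using
        (hld.sub_const ls).inner ℝ (hld.sub_const ls)
    have hfx : HasDerivAt (fun s => f (x s)) ⟪f' (x t), x' t⟫ t := by
      simpa [InnerProductSpace.toDual_apply_apply, Function.comp_def] using
        ((hgrad (x t)).hasFDerivAt).comp_hasDerivAt t hxd
    have hAx : HasDerivAt (fun s => A (x s) - b) (A (x' t)) t :=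
      (A.hasFDerivAt.comp_hasDerivAt t hxd).sub_const b
    have hinls : HasDerivAt (fun s => ⟪ls, A (x s) - b⟫) ⟪ls, A (x' t)⟫ t := by
      have h := (hasDerivAt_const t ls).inner ℝ hAx
      simpa using h
    have hnAx : HasDerivAt (fun s => ‖A (x s) - b‖^2)
        (⟪A (x t) - b, A (x' t)⟫ + ⟪A (x' t), A (x t) - b⟫) t := by
      simpa only [real_inner_self_eq_norm_sq] using hAx.inner ℝ hAx
    have hG : HasDerivAt G
        (⟪f' (x t), x' t⟫ + ⟪ls, A (x' t)⟫
          + β/2 * (⟪A (x t) - b, A (x' t)⟫ + ⟪A (x' t), A (x t) - b⟫)) t := by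
      rw [hGdef]
      exact ((hfx.add hinls).add (hnAx.const_mul (β/2))).sub_const (f xs)
    have ht2 : HasDerivAt (fun s : ℝ => θ^2 * s^2) (θ^2 * (2*t)) t := by
      have := (hasDerivAt_pow 2 t).const_mul (θ^2)
      simpa [pow_one] using this
    have hbig := ((ht2.mul hG).add ((hnp.add hnq).const_mul (1/2:ℝ))).add
      ((hnx.add hnl).const_mul (ξ/2))
    rw [hEfun]
    refine hbig.congr_deriv (Eq.symm ?_)
    rw [hDdef]
    linear_combination
      (-(1:ℝ)/2) * (real_inner_comm (x t - xs + (θ*t) • x' t) (x' t + (θ • x' t + (θ*t) • x'' t)))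
      + (-(1:ℝ)/2) * (real_inner_comm (l t - ls + (θ*t) • l' t) (l' t + (θ • l' t + (θ*t) • l'' t)))
      + (-ξ/2) * (real_inner_comm (x t - xs) (x' t)) + (-ξ/2) * (real_inner_comm (l t - ls) (l' t))
      + (-θ^2*t^2*β/2) * (real_inner_comm (A (x t) - b) (A (x' t)))
  have hDnonpos : ∀ t ∈ Ici t₀, D t ≤ 0 := by
    intro t ht
    have ht0 : 0 < t := lt_of_lt_of_le ht₀ ht
    have htne : t ≠ 0 := ne_of_gt ht0
    have hV : x' t + (θ • x' t + (θ*t) • x'' t)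
        = -(ξ • x' t) - (θ*t) • (f' (x t) + Adj (l t + (θ*t) • l' t)
            + β • Adj (A (x t) - b)) := by
      have h2 : (θ*t) • (x'' t + (α / t) • x' t + f' (x t) + Adj (l t + (θ*t) • l' t)
          + β • Adj (A (x t) - b)) = 0 := by rw [hode1 t ht, smul_zero]
      rw [hξdef]
      linear_combination (norm := (match_scalars <;> (field_simp; try ring))) h2
    have hW : l' t + (θ • l' t + (θ*t) • l'' t)
        = -(ξ • l' t) + (θ*t) • (A (x t + (θ*t) • x' t) - b) := by
      have h2 : (θ*t) • (l'' t + (α / t) • l' t - (A (x t + (θ*t) • x' t) - b)) = 0 := by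
        rw [hode2 t ht, smul_zero]
      rw [hξdef]
      linear_combination (norm := (match_scalars <;> (field_simp; try ring))) h2
    have hkey : D t = 2*θ * (θ*t) * G t
        - (θ*t) * ⟪f' (x t) + Adj ls + β • Adj (A (x t) - b), x t - xs⟫
        - ξ * (θ*t) * (‖x' t‖^2 + ‖l' t‖^2) := by
      simp only [hDdef]
      rw [hV, hW]
      simp only [hGdef, hAdj, map_add, _root_.map_smul, map_sub, inner_add_left, inner_add_right,
        inner_sub_left, inner_sub_right, inner_smul_left, inner_smul_right,
        inner_neg_left, inner_neg_right, RCLike.inner_apply, conj_trivial,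
        ContinuousLinearMap.adjoint_inner_left, ContinuousLinearMap.adjoint_inner_right,
        hopt2, ← real_inner_self_eq_norm_sq]
      linear_combination
        (θ*t) * real_inner_comm (x t) (f' (x t))
        + (-(θ*t)) * real_inner_comm xs (f' (x t))
        + (θ*t) * real_inner_comm (A (x t)) (l t)
        + (-(θ*t)) * real_inner_comm b (l t)
        + (-(θ^2*t^2*β)) * real_inner_comm (A (x t)) (A (x' t))
        + (θ^2*t^2*β) * real_inner_comm b (A (x' t))
        + (-(θ^2*t^2)) * real_inner_comm (f' (x t)) (x' t)
        + (θ^2*t^2) * real_inner_comm (A (x' t)) (l t)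
        + (θ^2*t^2) * real_inner_comm (A (x t)) (l' t)
        + (-(θ^2*t^2)) * real_inner_comm b (l' t)
        + (θ^3*t^3) * real_inner_comm (A (x' t)) (l' t)
    rw [hkey]
    have hGle' := hGle t
    have hGnn := hGnonneg t
    have hθt : (0:ℝ) < θ * t := by positivity
    have hN : (0:ℝ) ≤ ‖x' t‖^2 + ‖l' t‖^2 := by positivity
    have h2θ : 2*θ ≤ 1 := by linarith
    nlinarith [mul_le_mul_of_nonneg_left hGle' hθt.le, mul_nonneg hθt.le hGnn,
      mul_nonneg (mul_nonneg hξpos.le hθt.le) hN,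
      mul_le_mul_of_nonneg_right h2θ (mul_nonneg hθt.le hGnn)]
  have hanti : ∀ t ∈ Ici t₀, E t ≤ E t₀ := by
    have hcont : ContinuousOn E (Ici t₀) :=
      fun s hs => ((hEd s hs).continuousAt).continuousWithinAt
    have hdiff : DifferentiableOn ℝ E (interior (Ici t₀)) := by
      rw [interior_Ici]
      exact fun s hs => ((hEd s (mem_Ici.mpr (le_of_lt hs))).differentiableAt).differentiableWithinAt
    have hderiv : ∀ s ∈ interior (Ici t₀), deriv E s ≤ 0 := by
      rw [interior_Ici]; intro s hs
      rw [(hEd s (mem_Ici.mpr (le_of_lt hs))).deriv]; exact hDnonpos s (mem_Ici.mpr (le_of_lt hs))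
    intro t ht
    exact antitoneOn_of_deriv_nonpos (convex_Ici t₀) hcont hdiff hderiv self_mem_Ici ht ht
  -- conclusions
  intro t ht
  have ht0 : 0 < t := lt_of_lt_of_le ht₀ ht
  have hEt := hanti t ht
  have hterm1 : 0 ≤ θ^2 * t^2 * G t := mul_nonneg (by positivity) (hGnonneg t)
  have hnorm1 : 0 ≤ ‖x t - xs + (θ*t) • x' t‖^2 + ‖l t - ls + (θ*t) • l' t‖^2 := by positivity
  have hnorm2 : 0 ≤ ‖x t - xs‖^2 + ‖l t - ls‖^2 := by positivity
  have hEt' := hEeq t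
  have hE0nonneg : 0 ≤ E t₀ := by
    rw [hEeq t₀]
    have h1 : 0 ≤ θ^2 * t₀^2 * G t₀ := mul_nonneg (by positivity) (hGnonneg t₀)
    have h2 : 0 ≤ 1/2 * (‖x t₀ - xs + (θ*t₀) • x' t₀‖^2 + ‖l t₀ - ls + (θ*t₀) • l' t₀‖^2) := by
      positivity
    have h3 : 0 ≤ ξ/2 * (‖x t₀ - xs‖^2 + ‖l t₀ - ls‖^2) := by
      apply mul_nonneg (by linarith) (by positivity)
    linarith
  have hEt₀ : pdEnergy f A b α β θ x x' l l' xs ls t₀ = E t₀ := by rw [hEdef]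
  have hΔle : ‖x t - xs‖ ^ 2 + ‖l t - ls‖ ^ 2 ≤ 2 * E t₀ / ξ := by
    rw [le_div_iff₀ hξpos]
    nlinarith [hEt, hEt', hterm1, hnorm1]
  refine ⟨by rwa [hEt₀], ?_⟩
  rw [hEt₀]
  have hP : ‖x t - xs + (θ*t) • x' t‖^2 + ‖l t - ls + (θ*t) • l' t‖^2 ≤ 2 * E t₀ := by
    have h3 : 0 ≤ ξ/2 * (‖x t - xs‖^2 + ‖l t - ls‖^2) := by
      apply mul_nonneg (by linarith) (by positivity)
    linarith
  have htri := l2_triangle (x t - xs + (θ*t) • x' t) (-(x t - xs))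
    (l t - ls + (θ*t) • l' t) (-(l t - ls))
  have e1 : x t - xs + (θ*t) • x' t + -(x t - xs) = (θ*t) • x' t := by abel
  have e2 : l t - ls + (θ*t) • l' t + -(l t - ls) = (θ*t) • l' t := by abel
  rw [e1, e2, norm_neg, norm_neg] at htri
  have hθt : 0 ≤ θ * t := by positivity
  have e3 : ‖(θ*t) • x' t‖^2 + ‖(θ*t) • l' t‖^2 = (θ*t)^2 * (‖x' t‖^2 + ‖l' t‖^2) := by
    rw [norm_smul, norm_smul, Real.norm_eq_abs, mul_pow, mul_pow, sq_abs]; ring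
  rw [e3, Real.sqrt_mul (by positivity), Real.sqrt_sq hθt] at htri
  have hs1 : Real.sqrt (‖x t - xs + (θ*t) • x' t‖^2 + ‖l t - ls + (θ*t) • l' t‖^2)
      ≤ Real.sqrt (2 * E t₀) := Real.sqrt_le_sqrt hP
  have hs2 : Real.sqrt (‖x t - xs‖^2 + ‖l t - ls‖^2)
      ≤ Real.sqrt (2 * E t₀) / Real.sqrt ξ := by
    rw [← Real.sqrt_div (by linarith)]
    exact Real.sqrt_le_sqrt hΔle
  have hkey : θ * t * Real.sqrt (‖x' t‖^2 + ‖l' t‖^2)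
      ≤ Real.sqrt (2 * E t₀) + Real.sqrt (2 * E t₀) / Real.sqrt ξ := by linarith
  have hfin : t * Real.sqrt (‖x' t‖^2 + ‖l' t‖^2)
      ≤ (Real.sqrt (2 * E t₀) + Real.sqrt (2 * E t₀) / Real.sqrt ξ) / θ := by
    rw [le_div_iff₀ hθpos]
    calc t * Real.sqrt (‖x' t‖^2 + ‖l' t‖^2) * θ
        = θ * t * Real.sqrt (‖x' t‖^2 + ‖l' t‖^2) := by ring
      _ ≤ _ := hkey
  calc t * Real.sqrt (‖x' t‖ ^ 2 + ‖l' t‖ ^ 2)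
      ≤ (Real.sqrt (2 * E t₀) + Real.sqrt (2 * E t₀) / Real.sqrt ξ) / θ := hfin
    _ = 1 / θ * (1 / Real.sqrt ξ + 1) * Real.sqrt (2 * E t₀) := by ring
end

section
/- Assume additionally that ∇f is ℓ-Lipschitz continuous for some ℓ > 0, that α > 3 and 1/2 > θ > 1/(α−1), and that there exists at least one primal-dual optimal solution. Then for every initial condition (x(t₀),λ(t₀)) = (x₀,λ₀) ∈ X × Y and (ẋ(t₀),λ̇(t₀)) = (ẋ₀,λ̇₀) ∈ X × Y, the dynamical system (PD-AVD) has a unique global twice continuously differentiable solution (x,λ) : [t₀,∞) → X × Y. -/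
open Set MeasureTheory Filter Topology
open scoped RealInnerProductSpace ENNReal
open Metric Real
open scoped NNReal

/-- `IsPDAVDSolution t₀ α β θ f' A b x l x' x'' l' l''` says that `(x,λ) = (x,l)` is a twice
continuously differentiable solution on `[t₀,∞)` of the dynamical system (PD-AVD), with first
and second derivative functions `x', x''` (for the primal trajectory) and `l', l''` (for the
dual trajectory). -/
def IsPDAVDSolution {X Y : Type*}
    [NormedAddCommGroup X] [InnerProductSpace ℝ X] [CompleteSpace X]
    [NormedAddCommGroup Y] [InnerProductSpace ℝ Y] [CompleteSpace Y]
    (t₀ α β θ : ℝ) (f' : X → X) (A : X →L[ℝ] Y) (b : Y)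
    (x : ℝ → X) (l : ℝ → Y) (x' x'' : ℝ → X) (l' l'' : ℝ → Y) : Prop :=
  (∀ t ∈ Ici t₀, HasDerivAt x (x' t) t) ∧
  (∀ t ∈ Ici t₀, HasDerivAt x' (x'' t) t) ∧
  ContinuousOn x'' (Ici t₀) ∧
  (∀ t ∈ Ici t₀, HasDerivAt l (l' t) t) ∧
  (∀ t ∈ Ici t₀, HasDerivAt l' (l'' t) t) ∧
  ContinuousOn l'' (Ici t₀) ∧
  (∀ t ∈ Ici t₀, x'' t + (α / t) • x' t + f' (x t)
      + (ContinuousLinearMap.adjoint A) (l t + (θ * t) • l' t)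
      + β • (ContinuousLinearMap.adjoint A) (A (x t) - b) = 0) ∧
  (∀ t ∈ Ici t₀, l'' t + (α / t) • l' t - (A (x t + (θ * t) • x' t) - b) = 0)



section BallProj

variable {E : Type*} [NormedAddCommGroup E] [NormedSpace ℝ E]

noncomputable def ballProj (M : ℝ) (u : E) : E := if ‖u‖ ≤ M then u else (M / ‖u‖) • u

lemma ballProj_eq_self {M : ℝ} {u : E} (h : ‖u‖ ≤ M) : ballProj M u = u := if_pos h

lemma norm_ballProj_le {M : ℝ} (hM : 0 ≤ M) (u : E) : ‖ballProj M u‖ ≤ ‖u‖ := by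
  unfold ballProj
  split_ifs with h
  · exact le_rfl
  · push_neg at h
    have hu : 0 < ‖u‖ := lt_of_le_of_lt hM h
    rw [norm_smul, Real.norm_eq_abs, abs_of_nonneg (div_nonneg hM hu.le),
      div_mul_cancel₀ _ hu.ne']
    exact h.le

lemma norm_ballProj_le_M {M : ℝ} (hM : 0 ≤ M) (u : E) : ‖ballProj M u‖ ≤ M := by
  unfold ballProj
  split_ifs with h
  · exact h
  · push_neg at h
    have hu : 0 < ‖u‖ := lt_of_le_of_lt hM h
    rw [norm_smul, Real.norm_eq_abs, abs_of_nonneg (div_nonneg hM hu.le),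
      div_mul_cancel₀ _ hu.ne']

lemma ballProj_lip_aux {M : ℝ} (hM : 0 ≤ M) {u w : E} (h : ‖w‖ ≤ ‖u‖) :
    ‖ballProj M u - ballProj M w‖ ≤ 2 * ‖u - w‖ := by
  have hd : ‖u‖ - ‖w‖ ≤ ‖u - w‖ := norm_sub_norm_le u w
  have hd0 : 0 ≤ ‖u - w‖ := norm_nonneg _
  by_cases hu : ‖u‖ ≤ M
  · rw [ballProj_eq_self hu, ballProj_eq_self (h.trans hu)]; linarith
  push_neg at hu
  have hu0 : 0 < ‖u‖ := lt_of_le_of_lt hM hu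
  have hr0 : 0 ≤ M / ‖u‖ := div_nonneg hM hu0.le
  have hr1 : M / ‖u‖ ≤ 1 := (div_le_one hu0).2 hu.le
  by_cases hw : ‖w‖ ≤ M
  · -- case 2
    rw [ballProj_eq_self hw]
    have key : (M / ‖u‖) • u - w = (M / ‖u‖) • (u - w) + ((M / ‖u‖) - 1) • w := by
      rw [smul_sub, sub_smul, one_smul]; abel
    rw [show ballProj M u = (M / ‖u‖) • u from if_neg (not_le.2 hu), key]
    have h1 : ‖(M / ‖u‖) • (u - w)‖ ≤ ‖u - w‖ := by
      rw [norm_smul, Real.norm_eq_abs, abs_of_nonneg hr0]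
      nlinarith
    have h2 : ‖((M / ‖u‖) - 1) • w‖ ≤ ‖u - w‖ := by
      rw [norm_smul, Real.norm_eq_abs, abs_of_nonpos (by linarith)]
      have : (-(M / ‖u‖ - 1)) * ‖w‖ ≤ (1 - M / ‖u‖) * ‖u‖ := by
        have : 0 ≤ 1 - M / ‖u‖ := by linarith
        nlinarith
      have h3 : (1 - M / ‖u‖) * ‖u‖ = ‖u‖ - M := by
        field_simp
      linarith
    calc ‖(M / ‖u‖) • (u - w) + ((M / ‖u‖) - 1) • w‖
        ≤ ‖(M / ‖u‖) • (u - w)‖ + ‖((M / ‖u‖) - 1) • w‖ := norm_add_le _ _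
      _ ≤ 2 * ‖u - w‖ := by linarith
  · -- case 3
    push_neg at hw
    have hw0 : 0 < ‖w‖ := lt_of_le_of_lt hM hw
    rw [show ballProj M u = (M / ‖u‖) • u from if_neg (not_le.2 hu),
      show ballProj M w = (M / ‖w‖) • w from if_neg (not_le.2 hw)]
    have key : (M / ‖u‖) • u - (M / ‖w‖) • w
        = (M / ‖u‖) • (u - w) + ((M / ‖u‖) - (M / ‖w‖)) • w := by
      rw [smul_sub, sub_smul]; abel
    rw [key]
    have h1 : ‖(M / ‖u‖) • (u - w)‖ ≤ ‖u - w‖ := by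
      rw [norm_smul, Real.norm_eq_abs, abs_of_nonneg hr0]
      nlinarith
    have h2 : ‖((M / ‖u‖) - (M / ‖w‖)) • w‖ ≤ ‖u - w‖ := by
      rw [norm_smul, Real.norm_eq_abs]
      have hle : M / ‖u‖ ≤ M / ‖w‖ := div_le_div_of_nonneg_left hM hw0 h
      rw [abs_of_nonpos (by linarith)]
      have heq : (-(M / ‖u‖ - M / ‖w‖)) * ‖w‖ = (M / ‖u‖) * (‖u‖ - ‖w‖) := by
        field_simp
        ring
      rw [heq]
      nlinarith
    calc ‖(M / ‖u‖) • (u - w) + ((M / ‖u‖) - (M / ‖w‖)) • w‖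
        ≤ ‖(M / ‖u‖) • (u - w)‖ + ‖((M / ‖u‖) - (M / ‖w‖)) • w‖ := norm_add_le _ _
      _ ≤ 2 * ‖u - w‖ := by linarith

lemma norm_ballProj_sub_le {M : ℝ} (hM : 0 ≤ M) (u w : E) :
    ‖ballProj M u - ballProj M w‖ ≤ 2 * ‖u - w‖ := by
  rcases le_total ‖w‖ ‖u‖ with h | h
  · exact ballProj_lip_aux hM h
  · rw [norm_sub_rev, norm_sub_rev u w]
    exact ballProj_lip_aux hM h

end BallProj

lemma gronwallBound_mono_x {δ K ε : ℝ} (hδ : 0 ≤ δ) (hK : 0 ≤ K) (hε : 0 ≤ ε)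
    {x y : ℝ} (h : x ≤ y) : gronwallBound δ K ε x ≤ gronwallBound δ K ε y := by
  by_cases hK0 : K = 0
  · subst hK0; rw [gronwallBound_K0]; dsimp only; nlinarith
  · rw [gronwallBound_of_K_ne_0 hK0]
    dsimp only
    have h1 : Real.exp (K * x) ≤ Real.exp (K * y) :=
      Real.exp_le_exp.2 (by nlinarith)
    have h2 : 0 ≤ ε / K := div_nonneg hε (lt_of_le_of_ne hK (Ne.symm hK0)).le
    nlinarith

lemma gronwallBound_nonneg {δ K ε x : ℝ} (hδ : 0 ≤ δ) (hK : 0 ≤ K) (hε : 0 ≤ ε)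
    (hx : 0 ≤ x) : 0 ≤ gronwallBound δ K ε x := by
  have h := gronwallBound_mono_x hδ hK hε hx
  rw [gronwallBound_x0] at h
  exact hδ.trans h

section GlobalExist

variable {E : Type*} [NormedAddCommGroup E] [NormedSpace ℝ E] [CompleteSpace E]

lemma exists_solution_globalLipschitz
    (F : ℝ → E → E) (a t₀ b : ℝ) (hat : a ≤ t₀) (htb : t₀ ≤ b)
    (K : ℝ≥0) (hlip : ∀ t ∈ Icc a b, LipschitzWith K (F t))
    (hcont : ∀ x : E, ContinuousOn (fun t => F t x) (Icc a b)) (u₀ : E) :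
    ∃ u : ℝ → E, u t₀ = u₀ ∧ ∀ t ∈ Icc a b, HasDerivWithinAt u (F t (u t)) (Icc a b) t := by
  have hab : a ≤ b := hat.trans htb
  -- bound on ‖F t u₀‖
  obtain ⟨B₀, hB₀⟩ := isCompact_Icc.exists_bound_of_continuousOn (hcont u₀)
  set B : ℝ := max B₀ 0 with hBdef
  have hB0 : 0 ≤ B := le_max_right _ _
  have hB : ∀ t ∈ Icc a b, ‖F t u₀‖ ≤ B := fun t ht => (hB₀ t ht).trans (le_max_left _ _)
  have hFbound : ∀ t ∈ Icc a b, ∀ x : E, ‖F t x‖ ≤ B + K * ‖x - u₀‖ := by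
    intro t ht x
    have h1 : ‖F t x - F t u₀‖ ≤ K * ‖x - u₀‖ := by
      have := (hlip t ht).dist_le_mul x u₀
      rwa [dist_eq_norm, dist_eq_norm] at this
    have := norm_sub_norm_le (F t x) (F t u₀)
    have := hB t ht
    linarith
  set M : ℝ := gronwallBound 0 (K : ℝ) B (b - a) with hMdef
  have hM0 : 0 ≤ M := gronwallBound_nonneg le_rfl K.coe_nonneg hB0 (by linarith)
  set G : ℝ → E → E := fun t x => F t (u₀ + ballProj M (x - u₀)) with hGdef
  have hGbound : ∀ t ∈ Icc a b, ∀ x : E, ‖G t x‖ ≤ B + K * M := by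
    intro t ht x
    have h1 := hFbound t ht (u₀ + ballProj M (x - u₀))
    rw [add_sub_cancel_left] at h1
    have h2 : ‖ballProj M (x - u₀)‖ ≤ M := norm_ballProj_le_M hM0 _
    nlinarith [K.coe_nonneg]
  have hGlipschitz : ∀ t ∈ Icc a b, LipschitzWith (2 * K) (G t) := by
    intro t ht
    apply LipschitzWith.of_dist_le_mul
    intro x y
    rw [dist_eq_norm, dist_eq_norm]
    have h1 : ‖G t x - G t y‖
        ≤ K * ‖(u₀ + ballProj M (x - u₀)) - (u₀ + ballProj M (y - u₀))‖ := by
      have := (hlip t ht).dist_le_mul (u₀ + ballProj M (x - u₀)) (u₀ + ballProj M (y - u₀))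
      rwa [dist_eq_norm, dist_eq_norm] at this
    have h2 : (u₀ + ballProj M (x - u₀)) - (u₀ + ballProj M (y - u₀))
        = ballProj M (x - u₀) - ballProj M (y - u₀) := by abel
    have h3 : ‖ballProj M (x - u₀) - ballProj M (y - u₀)‖ ≤ 2 * ‖(x - u₀) - (y - u₀)‖ :=
      norm_ballProj_sub_le hM0 _ _
    have h4 : (x - u₀) - (y - u₀) = x - y := by abel
    rw [h2] at h1
    rw [h4] at h3
    push_cast
    nlinarith [K.coe_nonneg, norm_nonneg (x - y)]
  set C : ℝ := B + K * M with hCdef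
  have hC0 : 0 ≤ C := by have := K.coe_nonneg; nlinarith
  set R : ℝ := C * max (b - t₀) (t₀ - a) with hRdef
  have hR0 : 0 ≤ R := mul_nonneg hC0 (le_max_of_le_left (by linarith))
  have hpl : IsPicardLindelof G (tmin := a) (tmax := b) ⟨t₀, hat, htb⟩ u₀ ⟨R, hR0⟩ 0
      ⟨C, hC0⟩ (2 * K) :=
    { lipschitzOnWith := fun t ht => (hGlipschitz t ht).lipschitzOnWith
      continuousOn := fun x _ => hcont _
      norm_le := fun t ht x _ => hGbound t ht x
      mul_max_le := by
        show C * max (b - t₀) (t₀ - a) ≤ R - 0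
        simp only [sub_zero, hRdef, le_refl] }
  obtain ⟨u, hu₀, hud⟩ := hpl.exists_eq_forall_mem_Icc_hasDerivWithinAt₀
  have hucont : ContinuousOn u (Icc a b) := fun t ht => (hud t ht).continuousWithinAt
  -- norm of G along u
  have hGu : ∀ t ∈ Icc a b, ‖G t (u t)‖ ≤ K * ‖u t - u₀‖ + B := by
    intro t ht
    have h1 := hFbound t ht (u₀ + ballProj M (u t - u₀))
    rw [add_sub_cancel_left] at h1
    have h2 : ‖ballProj M (u t - u₀)‖ ≤ ‖u t - u₀‖ := norm_ballProj_le hM0 _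
    have := K.coe_nonneg
    nlinarith
  -- a priori bound, right of t₀
  have hright : ∀ t ∈ Icc t₀ b, ‖u t - u₀‖ ≤ M := by
    intro t ht
    have key := norm_le_gronwallBound_of_norm_deriv_right_le
      (f := fun s => u s - u₀) (f' := fun s => G s (u s)) (δ := 0) (K := (K : ℝ)) (ε := B)
      (a := t₀) (b := b)
      (fun s hs => ((hucont.mono (Icc_subset_Icc_left hat)) s hs).sub continuousWithinAt_const)
      (fun s hs => ?_) (by simp [hu₀]) (fun s hs => hGu s ⟨hat.trans hs.1, hs.2.le⟩)
    · have h1 := key t ht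
      refine h1.trans (gronwallBound_mono_x le_rfl K.coe_nonneg hB0 ?_)
      linarith [ht.1, ht.2]
    · have hs' : s ∈ Icc a b := ⟨hat.trans hs.1, hs.2.le⟩
      have h1 : HasDerivWithinAt u (G s (u s)) (Icc a b) s := hud s hs'
      have h2 : Icc a b ∈ 𝓝[Ici s] s := Icc_mem_nhdsGE_of_mem ⟨hs'.1, hs.2⟩
      exact (h1.mono_of_mem_nhdsWithin h2).sub_const u₀
  -- a priori bound, left of t₀
  have hleft : ∀ t ∈ Icc a t₀, ‖u t - u₀‖ ≤ M := by
    intro t ht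
    set g : ℝ → E := fun s => u (2 * t₀ - s) - u₀ with hgdef
    have hgcont : ContinuousOn g (Icc t₀ (2 * t₀ - a)) := by
      apply ContinuousOn.sub _ continuousOn_const
      apply hucont.comp ((continuousOn_const (c := (2:ℝ) * t₀)).sub continuousOn_id)
      intro s hs
      simp only [mem_Icc] at hs
      have h1 : a ≤ 2 * t₀ - s := by linarith [hs.2]
      have h2 : 2 * t₀ - s ≤ b := by linarith [hs.1]
      exact ⟨h1, h2⟩
    have hg' : ∀ s ∈ Ico t₀ (2 * t₀ - a),
        HasDerivWithinAt g ((-1 : ℝ) • G (2 * t₀ - s) (u (2 * t₀ - s))) (Ici s) s := by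
      intro s hs
      have hτ : 2 * t₀ - s ∈ Icc a b := ⟨by linarith [hs.2], by linarith [hs.1]⟩
      have h1 : HasDerivWithinAt u (G (2 * t₀ - s) (u (2 * t₀ - s))) (Icc a b) (2 * t₀ - s) :=
        hud _ hτ
      have h2 : Icc a b ∈ 𝓝[Iic (2 * t₀ - s)] (2 * t₀ - s) :=
        Icc_mem_nhdsLE_of_mem ⟨by linarith [hs.2], hτ.2⟩
      have h3 : HasDerivWithinAt u (G (2 * t₀ - s) (u (2 * t₀ - s)))
          (Iic (2 * t₀ - s)) (2 * t₀ - s) := h1.mono_of_mem_nhdsWithin h2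
      have h4 : HasDerivWithinAt (fun s : ℝ => 2 * t₀ - s) (-1 : ℝ) (Ici s) s := by
        simpa using ((hasDerivAt_id s).const_sub (2 * t₀)).hasDerivWithinAt (s := Ici s)
      have h5 : MapsTo (fun s : ℝ => 2 * t₀ - s) (Ici s) (Iic (2 * t₀ - s)) := by
        intro r hr
        simp only [mem_Iic]
        have : s ≤ r := hr
        linarith
      have := h3.scomp s h4 h5
      exact this.sub_const u₀
    have key := norm_le_gronwallBound_of_norm_deriv_right_le
      (f := g) (f' := fun s => (-1 : ℝ) • G (2 * t₀ - s) (u (2 * t₀ - s))) (δ := 0)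
      (K := (K : ℝ)) (ε := B) (a := t₀) (b := 2 * t₀ - a)
      hgcont hg' (by simp [hgdef, hu₀, two_mul]) ?_
    · have hs : 2 * t₀ - t ∈ Icc t₀ (2 * t₀ - a) := ⟨by linarith [ht.2], by linarith [ht.1]⟩
      have h1 := key _ hs
      have h2 : g (2 * t₀ - t) = u t - u₀ := by
        simp only [hgdef]
        norm_num
      rw [h2] at h1
      refine h1.trans (gronwallBound_mono_x le_rfl K.coe_nonneg hB0 ?_)
      linarith [ht.1, ht.2]
    · intro s hs
      have hτ : 2 * t₀ - s ∈ Icc a b := ⟨by linarith [hs.2], by linarith [hs.1]⟩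
      have h1 := hGu _ hτ
      rw [norm_smul]
      simp only [norm_neg, norm_one, one_mul, Real.norm_eq_abs]
      have h2 : g s = u (2 * t₀ - s) - u₀ := rfl
      rw [h2]
      simpa using h1
  -- conclude
  have hbound : ∀ t ∈ Icc a b, ‖u t - u₀‖ ≤ M := by
    intro t ht
    rcases le_total t t₀ with h | h
    · exact hleft t ⟨ht.1, h⟩
    · exact hright t ⟨h, ht.2⟩
  refine ⟨u, hu₀, fun t ht => ?_⟩
  have h1 := hud t ht
  have h2 : G t (u t) = F t (u t) := by
    simp only [hGdef]
    rw [ballProj_eq_self (hbound t ht), add_sub_cancel]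
  rwa [h2] at h1

end GlobalExist

section Glue

variable {E : Type*} [NormedAddCommGroup E] [NormedSpace ℝ E] [CompleteSpace E]

lemma exists_solution_Ici
    (F : ℝ → E → E) (a t₀ : ℝ) (hat : a < t₀)
    (hlip : ∀ b : ℝ, ∃ K : ℝ≥0, ∀ t ≤ b, LipschitzWith K (F t))
    (hcont : ∀ x : E, Continuous (fun t => F t x)) (u₀ : E) :
    ∃ u : ℝ → E, u t₀ = u₀ ∧ ∀ t ∈ Ici t₀, HasDerivAt u (F t (u t)) t := by
  -- solutions on [a, t₀+1+n]
  have hex : ∀ n : ℕ, ∃ u : ℝ → E, u t₀ = u₀ ∧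
      ∀ t ∈ Icc a (t₀ + 1 + n), HasDerivWithinAt u (F t (u t)) (Icc a (t₀ + 1 + n)) t := by
    intro n
    obtain ⟨K, hK⟩ := hlip (t₀ + 1 + n)
    exact exists_solution_globalLipschitz F a t₀ (t₀ + 1 + n) hat.le
      (by linarith [Nat.cast_nonneg (α := ℝ) n]) K (fun t ht => hK t ht.2)
      (fun x => (hcont x).continuousOn) u₀
  choose u hu₀ hud using hex
  -- interior derivative
  have hud' : ∀ n : ℕ, ∀ t ∈ Ioo a (t₀ + 1 + n), HasDerivAt (u n) (F t (u n t)) t := by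
    intro n t ht
    exact (hud n t (Ioo_subset_Icc_self ht)).hasDerivAt (Icc_mem_nhds ht.1 ht.2)
  have ht₀mem : ∀ n : ℕ, t₀ ∈ Ioo a (t₀ + 1 + n) := fun n =>
    ⟨hat, by linarith [Nat.cast_nonneg (α := ℝ) n]⟩
  -- compatibility
  have hcompat : ∀ n m : ℕ, n ≤ m → EqOn (u n) (u m) (Icc a (t₀ + 1 + n)) := by
    intro n m hnm
    obtain ⟨K, hK⟩ := hlip (t₀ + 1 + n)
    set v : ℝ → E → E := fun t => F (max (min t (t₀ + 1 + n)) a) with hvdef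
    have hv : ∀ t, LipschitzOnWith K (v t) univ := by
      intro t
      exact (hK _ (le_trans (max_le (min_le_right _ _)
        (by linarith [Nat.cast_nonneg (α := ℝ) n])) le_rfl)).lipschitzOnWith
    have hveq : ∀ t ∈ Ioo a (t₀ + 1 + n), v t = F t := by
      intro t ht
      simp only [hvdef]
      rw [min_eq_left ht.2.le, max_eq_left ht.1.le]
    apply ODE_solution_unique_of_mem_Icc (s := fun _ => (univ : Set E)) (fun t _ => hv t) (ht₀mem n)
    · exact fun t ht => (hud n t ht).continuousWithinAt
    · intro t ht
      rw [hveq t ht]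
      exact hud' n t ht
    · exact fun _ _ => mem_univ _
    · intro t ht
      have hnmr : (n : ℝ) ≤ m := Nat.cast_le.2 hnm
      have hsub : Icc a (t₀ + 1 + (n:ℝ)) ⊆ Icc a (t₀ + 1 + (m:ℝ)) :=
        Icc_subset_Icc_right (by linarith)
      exact ((hud m t (hsub ht)).continuousWithinAt).mono hsub
    · intro t ht
      rw [hveq t ht]
      refine hud' m t ⟨ht.1, ?_⟩
      have : (n : ℝ) ≤ m := Nat.cast_le.2 hnm
      linarith [ht.2]
    · exact fun _ _ => mem_univ _
    · rw [hu₀ n, hu₀ m]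
  -- glued function
  set U : ℝ → E := fun t => u ⌈t - t₀⌉₊ t with hUdef
  have hmem : ∀ t : ℝ, t < t₀ + 1 + ⌈t - t₀⌉₊ := by
    intro t
    have := Nat.le_ceil (t - t₀)
    linarith
  have hUeq : ∀ n : ℕ, ∀ t ∈ Icc a (t₀ + 1 + n), U t = u n t := by
    intro n t ht
    rcases le_total (⌈t - t₀⌉₊ : ℕ) n with h | h
    · exact hcompat _ n h ⟨ht.1, (hmem t).le⟩
    · exact (hcompat n _ h ht).symm
  have hU₀ : U t₀ = u₀ := by
    have : U t₀ = u 0 t₀ := hUeq 0 t₀ ⟨hat.le, by linarith⟩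
    rw [this, hu₀]
  refine ⟨U, hU₀, fun t ht => ?_⟩
  set n : ℕ := ⌈t - t₀⌉₊ with hndef
  have htmem : t ∈ Ioo a (t₀ + 1 + n) := ⟨lt_of_lt_of_le hat ht, hmem t⟩
  have hd : HasDerivAt (u n) (F t (u n t)) t := hud' n t htmem
  have heq : U =ᶠ[nhds t] u n := by
    filter_upwards [Ioo_mem_nhds htmem.1 htmem.2] with s hs
    exact hUeq n s (Ioo_subset_Icc_self hs)
  have hval : U t = u n t := hUeq n t (Ioo_subset_Icc_self htmem)
  rw [← hval] at hd
  exact hd.congr_of_eventuallyEq heq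

end Glue



section PDField

variable {X Y : Type*}
    [NormedAddCommGroup X] [InnerProductSpace ℝ X] [CompleteSpace X]
    [NormedAddCommGroup Y] [InnerProductSpace ℝ Y] [CompleteSpace Y]
    (t₀ α β θ : ℝ) (f' : X → X) (A : X →L[ℝ] Y) (b : Y)

noncomputable def pdField : ℝ → (X × Y × X × Y) → (X × Y × X × Y) := fun t u =>
  (u.2.2.1, u.2.2.2,
   -((α / max t t₀) • u.2.2.1) - f' u.1
     - (ContinuousLinearMap.adjoint A) (u.2.1 + (θ * max t t₀) • u.2.2.2)
     - β • (ContinuousLinearMap.adjoint A) (A u.1 - b),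
   -((α / max t t₀) • u.2.2.2) + (A (u.1 + (θ * max t t₀) • u.2.2.1) - b))

variable {t₀ α β θ f'}

lemma pdField_lipschitz (ht₀ : 0 < t₀) (hα0 : 0 < α) (hθ0 : 0 ≤ θ) (hβ0 : 0 ≤ β)
    {ℓ : ℝ≥0} (hlip : LipschitzWith ℓ f') (b' : ℝ) :
    ∃ K : ℝ≥0, ∀ t ≤ b', LipschitzWith K (pdField t₀ α β θ f' A b t) := by
  set At := ContinuousLinearMap.adjoint A with hAt
  set τm : ℝ := max b' t₀ with hτm
  have hτm0 : 0 < τm := lt_of_lt_of_le ht₀ (le_max_right _ _)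
  have hθτm : 0 ≤ θ * τm := mul_nonneg hθ0 hτm0.le
  have hβA : 0 ≤ β * ‖A‖ := mul_nonneg hβ0 (norm_nonneg _)
  set C : ℝ := 1 + α / t₀ + ℓ + ‖At‖ * (1 + θ * τm + β * ‖A‖) + ‖A‖ * (1 + θ * τm)
    with hC
  have hdiv0 : 0 ≤ α / t₀ := div_nonneg hα0.le ht₀.le
  have hterm1 : 0 ≤ ‖At‖ * (1 + θ * τm + β * ‖A‖) :=
    mul_nonneg (norm_nonneg _) (by linarith)
  have hterm2 : 0 ≤ ‖A‖ * (1 + θ * τm) := mul_nonneg (norm_nonneg _) (by linarith)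
  have hC1 : 1 ≤ C := by
    have := ℓ.coe_nonneg
    simp only [hC]
    linarith
  have hC0 : 0 ≤ C := by linarith
  refine ⟨⟨C, hC0⟩, fun t htb => ?_⟩
  apply LipschitzWith.of_dist_le_mul
  intro u w
  rw [dist_eq_norm, dist_eq_norm]
  set d : ℝ := ‖u - w‖ with hd
  have hd0 : 0 ≤ d := norm_nonneg _
  set τ : ℝ := max t t₀ with hτ
  have hτ1 : t₀ ≤ τ := le_max_right _ _
  have hτ2 : τ ≤ τm := max_le_max htb le_rfl
  have hτ0 : 0 < τ := lt_of_lt_of_le ht₀ hτ1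
  -- component distance bounds
  have e1 : ‖u.1 - w.1‖ ≤ d := by rw [← Prod.fst_sub]; exact norm_fst_le _
  have e2 : ‖u.2.1 - w.2.1‖ ≤ d := by
    rw [← Prod.fst_sub, ← Prod.snd_sub]
    exact (norm_fst_le _).trans (norm_snd_le _)
  have e3 : ‖u.2.2.1 - w.2.2.1‖ ≤ d := by
    rw [← Prod.fst_sub, ← Prod.snd_sub, ← Prod.snd_sub]
    exact ((norm_fst_le _).trans (norm_snd_le _)).trans (norm_snd_le _)
  have e4 : ‖u.2.2.2 - w.2.2.2‖ ≤ d := by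
    rw [← Prod.snd_sub, ← Prod.snd_sub, ← Prod.snd_sub]
    exact ((norm_snd_le _).trans (norm_snd_le _)).trans (norm_snd_le _)
  -- bound for third component
  have hαττ : α / τ ≤ α / t₀ := div_le_div_of_nonneg_left hα0.le ht₀ hτ1
  have hαt0 : 0 ≤ α / τ := div_nonneg hα0.le hτ0.le
  have hθτ : 0 ≤ θ * τ := mul_nonneg hθ0 hτ0.le
  have hθττm : θ * τ ≤ θ * τm := mul_le_mul_of_nonneg_left hτ2 hθ0
  have hb3 : ‖(-((α / τ) • u.2.2.1) - f' u.1 - At (u.2.1 + (θ * τ) • u.2.2.2)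
        - β • At (A u.1 - b))
      - (-((α / τ) • w.2.2.1) - f' w.1 - At (w.2.1 + (θ * τ) • w.2.2.2)
        - β • At (A w.1 - b))‖ ≤ C * d := by
    have hre : (-((α / τ) • u.2.2.1) - f' u.1 - At (u.2.1 + (θ * τ) • u.2.2.2)
          - β • At (A u.1 - b))
        - (-((α / τ) • w.2.2.1) - f' w.1 - At (w.2.1 + (θ * τ) • w.2.2.2)
          - β • At (A w.1 - b))
        = -((α / τ) • (u.2.2.1 - w.2.2.1)) - (f' u.1 - f' w.1)
          - (At (u.2.1 - w.2.1) + (θ * τ) • At (u.2.2.2 - w.2.2.2))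
          - β • At (A (u.1 - w.1)) := by
      simp only [map_sub, map_add, _root_.map_smul, smul_sub]
      abel
    rw [hre]
    have n1 : ‖(α / τ) • (u.2.2.1 - w.2.2.1)‖ ≤ (α / t₀) * d := by
      rw [norm_smul, Real.norm_eq_abs, abs_of_nonneg hαt0]
      exact mul_le_mul hαττ e3 (norm_nonneg _) hdiv0
    have n2 : ‖f' u.1 - f' w.1‖ ≤ (ℓ : ℝ) * d := by
      have h := hlip.dist_le_mul u.1 w.1
      rw [dist_eq_norm, dist_eq_norm] at h
      exact h.trans (mul_le_mul_of_nonneg_left e1 ℓ.coe_nonneg)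
    have n3 : ‖At (u.2.1 - w.2.1) + (θ * τ) • At (u.2.2.2 - w.2.2.2)‖
        ≤ ‖At‖ * d + (θ * τm) * (‖At‖ * d) := by
      refine (norm_add_le _ _).trans (add_le_add ?_ ?_)
      · exact (At.le_opNorm _).trans (mul_le_mul_of_nonneg_left e2 (norm_nonneg _))
      · rw [norm_smul, Real.norm_eq_abs, abs_of_nonneg hθτ]
        refine mul_le_mul hθττm ((At.le_opNorm _).trans
          (mul_le_mul_of_nonneg_left e4 (norm_nonneg _))) (norm_nonneg _) hθτm
    have n4 : ‖β • At (A (u.1 - w.1))‖ ≤ β * (‖At‖ * (‖A‖ * d)) := by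
      rw [norm_smul, Real.norm_eq_abs, abs_of_nonneg hβ0]
      refine mul_le_mul_of_nonneg_left ?_ hβ0
      refine (At.le_opNorm _).trans (mul_le_mul_of_nonneg_left ?_ (norm_nonneg _))
      exact (A.le_opNorm _).trans (mul_le_mul_of_nonneg_left e1 (norm_nonneg _))
    have tri : ‖-((α / τ) • (u.2.2.1 - w.2.2.1)) - (f' u.1 - f' w.1)
          - (At (u.2.1 - w.2.1) + (θ * τ) • At (u.2.2.2 - w.2.2.2))
          - β • At (A (u.1 - w.1))‖
        ≤ ‖(α / τ) • (u.2.2.1 - w.2.2.1)‖ + ‖f' u.1 - f' w.1‖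
          + ‖At (u.2.1 - w.2.1) + (θ * τ) • At (u.2.2.2 - w.2.2.2)‖
          + ‖β • At (A (u.1 - w.1))‖ := by
      refine (norm_sub_le _ _).trans (add_le_add ?_ le_rfl)
      refine (norm_sub_le _ _).trans (add_le_add ?_ le_rfl)
      refine (norm_sub_le _ _).trans (add_le_add ?_ le_rfl)
      rw [norm_neg]
    have hfin : (α / t₀) * d + (ℓ : ℝ) * d + (‖At‖ * d + (θ * τm) * (‖At‖ * d))
        + β * (‖At‖ * (‖A‖ * d)) ≤ C * d := by
      have expand : C * d = 1 * d + (α / t₀) * d + (ℓ : ℝ) * d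
          + (‖At‖ * d + (θ * τm) * (‖At‖ * d) + β * (‖At‖ * (‖A‖ * d)))
          + (‖A‖ * d + (θ * τm) * (‖A‖ * d)) := by
        simp only [hC]; ring
      rw [expand]
      have h1 : 0 ≤ 1 * d := by linarith
      have h2 : 0 ≤ ‖A‖ * d + (θ * τm) * (‖A‖ * d) := by
        have := mul_nonneg (norm_nonneg A) hd0
        have := mul_nonneg hθτm (mul_nonneg (norm_nonneg A) hd0)
        linarith
      linarith
    linarith [tri, n1, n2, n3, n4, hfin]
  -- bound for fourth component
  have hb4 : ‖(-((α / τ) • u.2.2.2) + (A (u.1 + (θ * τ) • u.2.2.1) - b))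
      - (-((α / τ) • w.2.2.2) + (A (w.1 + (θ * τ) • w.2.2.1) - b))‖ ≤ C * d := by
    have hre : (-((α / τ) • u.2.2.2) + (A (u.1 + (θ * τ) • u.2.2.1) - b))
        - (-((α / τ) • w.2.2.2) + (A (w.1 + (θ * τ) • w.2.2.1) - b))
        = -((α / τ) • (u.2.2.2 - w.2.2.2)) + (A (u.1 - w.1) + (θ * τ) • A (u.2.2.1 - w.2.2.1)) := by
      simp only [map_sub, map_add, _root_.map_smul, smul_sub]
      abel
    rw [hre]
    have n1 : ‖(α / τ) • (u.2.2.2 - w.2.2.2)‖ ≤ (α / t₀) * d := by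
      rw [norm_smul, Real.norm_eq_abs, abs_of_nonneg hαt0]
      exact mul_le_mul hαττ e4 (norm_nonneg _) hdiv0
    have n2 : ‖A (u.1 - w.1) + (θ * τ) • A (u.2.2.1 - w.2.2.1)‖
        ≤ ‖A‖ * d + (θ * τm) * (‖A‖ * d) := by
      refine (norm_add_le _ _).trans (add_le_add ?_ ?_)
      · exact (A.le_opNorm _).trans (mul_le_mul_of_nonneg_left e1 (norm_nonneg _))
      · rw [norm_smul, Real.norm_eq_abs, abs_of_nonneg hθτ]
        refine mul_le_mul hθττm ((A.le_opNorm _).trans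
          (mul_le_mul_of_nonneg_left e3 (norm_nonneg _))) (norm_nonneg _) hθτm
    have tri : ‖-((α / τ) • (u.2.2.2 - w.2.2.2))
          + (A (u.1 - w.1) + (θ * τ) • A (u.2.2.1 - w.2.2.1))‖
        ≤ ‖(α / τ) • (u.2.2.2 - w.2.2.2)‖
          + ‖A (u.1 - w.1) + (θ * τ) • A (u.2.2.1 - w.2.2.1)‖ := by
      refine (norm_add_le _ _).trans (add_le_add ?_ le_rfl)
      rw [norm_neg]
    have hfin : (α / t₀) * d + (‖A‖ * d + (θ * τm) * (‖A‖ * d)) ≤ C * d := by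
      have expand : C * d = 1 * d + (α / t₀) * d + (ℓ : ℝ) * d
          + (‖At‖ * (1 + θ * τm + β * ‖A‖)) * d
          + (‖A‖ * d + (θ * τm) * (‖A‖ * d)) := by
        simp only [hC]; ring
      rw [expand]
      have h1 : 0 ≤ 1 * d := by linarith
      have h2 : 0 ≤ (ℓ : ℝ) * d := mul_nonneg ℓ.coe_nonneg hd0
      have h3 : 0 ≤ (‖At‖ * (1 + θ * τm + β * ‖A‖)) * d := mul_nonneg hterm1 hd0
      linarith
    linarith [tri, n1, n2, hfin]
  show ‖pdField t₀ α β θ f' A b t u - pdField t₀ α β θ f' A b t w‖ ≤ C * d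
  simp only [pdField, Prod.norm_def, Prod.fst_sub, Prod.snd_sub, ← hAt, ← hτ]
  refine max_le ?_ (max_le ?_ (max_le ?_ ?_))
  · exact e3.trans (le_mul_of_one_le_left hd0 hC1)
  · exact e4.trans (le_mul_of_one_le_left hd0 hC1)
  · exact hb3
  · exact hb4

lemma pdField_continuous (ht₀ : 0 < t₀) (x : X × Y × X × Y) :
    Continuous fun t => pdField t₀ α β θ f' A b t x := by
  have hmax : Continuous fun t : ℝ => max t t₀ := continuous_id.max continuous_const
  have hne : ∀ t : ℝ, max t t₀ ≠ 0 := fun t =>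
    (lt_of_lt_of_le ht₀ (le_max_right _ _)).ne'
  have hdiv : Continuous fun t : ℝ => α / max t t₀ := continuous_const.div hmax hne
  have hθτ : Continuous fun t : ℝ => θ * max t t₀ := continuous_const.mul hmax
  unfold pdField
  refine continuous_const.prodMk (continuous_const.prodMk (Continuous.prodMk ?_ ?_))
  · refine (((hdiv.smul continuous_const).neg.sub continuous_const).sub ?_).sub
      continuous_const
    exact (ContinuousLinearMap.adjoint A).continuous.comp
      (continuous_const.add (hθτ.smul continuous_const))
  · refine ((hdiv.smul continuous_const).neg).add
      ((A.continuous.comp (continuous_const.add (hθτ.smul continuous_const))).sub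
        continuous_const)

end PDField


theorem stmt7
    {X Y : Type*}
    [NormedAddCommGroup X] [InnerProductSpace ℝ X] [CompleteSpace X]
    [NormedAddCommGroup Y] [InnerProductSpace ℝ Y] [CompleteSpace Y]
    (f : X → ℝ) (f' : X → X) (A : X →L[ℝ] Y) (b : Y)
    (hconv : ConvexOn ℝ univ f)
    (hgrad : ∀ u, HasGradientAt f (f' u) u)
    (ℓ : NNReal) (hℓ : 0 < ℓ) (hlip : LipschitzWith ℓ f')
    (t₀ α β θ : ℝ) (ht₀ : 0 < t₀) (hα : 3 < α) (hβ : 0 ≤ β)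
    (hθ1 : 1 / (α - 1) < θ) (hθ2 : θ < 1 / 2)
    (hsol : ∃ xs : X, ∃ ls : Y,
      f' xs + (ContinuousLinearMap.adjoint A) ls = 0 ∧ A xs = b)
    (x₀ : X) (lam₀ : Y) (xd₀ : X) (lamd₀ : Y) :
    ∃ x : ℝ → X, ∃ l : ℝ → Y, ∃ x' x'' : ℝ → X, ∃ l' l'' : ℝ → Y,
      IsPDAVDSolution t₀ α β θ f' A b x l x' x'' l' l'' ∧
      x t₀ = x₀ ∧ l t₀ = lam₀ ∧ x' t₀ = xd₀ ∧ l' t₀ = lamd₀ ∧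
      ∀ (y : ℝ → X) (m : ℝ → Y) (y' y'' : ℝ → X) (m' m'' : ℝ → Y),
        IsPDAVDSolution t₀ α β θ f' A b y m y' y'' m' m'' →
        y t₀ = x₀ → m t₀ = lam₀ → y' t₀ = xd₀ → m' t₀ = lamd₀ →
        ∀ t ∈ Ici t₀, y t = x t ∧ m t = l t := by
  have hα0 : (0:ℝ) < α := by linarith
  have hα1 : (0:ℝ) < α - 1 := by linarith
  have hθ0 : (0:ℝ) < θ := lt_trans (by positivity) hθ1
  clear hconv hgrad hsol hθ2 hℓ f
  set At := ContinuousLinearMap.adjoint A with hAtdef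
  set F := pdField t₀ α β θ f' A b with hFdef
  have hFlip : ∀ b' : ℝ, ∃ K : ℝ≥0, ∀ t ≤ b', LipschitzWith K (F t) :=
    fun b' => pdField_lipschitz A b ht₀ hα0 hθ0.le hβ hlip b'
  have hFcont : ∀ x : X × Y × X × Y, Continuous fun t => F t x :=
    fun x => pdField_continuous A b ht₀ x
  obtain ⟨u, hu₀, hud⟩ := exists_solution_Ici F (t₀ - 1) t₀ (by linarith) hFlip hFcont
      (x₀, lam₀, xd₀, lamd₀)
  -- projections of derivative
  have hP1 : ∀ t ∈ Ici t₀, HasDerivAt (fun s => (u s).1) ((u t).2.2.1) t := by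
    intro t ht
    exact (ContinuousLinearMap.fst ℝ X (Y × X × Y)).hasFDerivAt.comp_hasDerivAt t (hud t ht)
  have hQ : ∀ t ∈ Ici t₀, HasDerivAt (fun s => (u s).2) ((F t (u t)).2) t := by
    intro t ht
    exact (ContinuousLinearMap.snd ℝ X (Y × X × Y)).hasFDerivAt.comp_hasDerivAt t (hud t ht)
  have hP2 : ∀ t ∈ Ici t₀, HasDerivAt (fun s => (u s).2.1) ((F t (u t)).2.1) t := by
    intro t ht
    exact (ContinuousLinearMap.fst ℝ Y (X × Y)).hasFDerivAt.comp_hasDerivAt t (hQ t ht)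
  have hQ2 : ∀ t ∈ Ici t₀, HasDerivAt (fun s => (u s).2.2) ((F t (u t)).2.2) t := by
    intro t ht
    exact (ContinuousLinearMap.snd ℝ Y (X × Y)).hasFDerivAt.comp_hasDerivAt t (hQ t ht)
  have hP3 : ∀ t ∈ Ici t₀, HasDerivAt (fun s => (u s).2.2.1) ((F t (u t)).2.2.1) t := by
    intro t ht
    exact (ContinuousLinearMap.fst ℝ X Y).hasFDerivAt.comp_hasDerivAt t (hQ2 t ht)
  have hP4 : ∀ t ∈ Ici t₀, HasDerivAt (fun s => (u s).2.2.2) ((F t (u t)).2.2.2) t := by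
    intro t ht
    exact (ContinuousLinearMap.snd ℝ X Y).hasFDerivAt.comp_hasDerivAt t (hQ2 t ht)
  -- continuity facts
  have hucont : ContinuousOn u (Ici t₀) := fun t ht =>
    (hud t ht).continuousAt.continuousWithinAt
  have hxc : ContinuousOn (fun s => (u s).1) (Ici t₀) :=
    continuous_fst.comp_continuousOn hucont
  have hlc : ContinuousOn (fun s => (u s).2.1) (Ici t₀) :=
    (continuous_fst.comp continuous_snd).comp_continuousOn hucont
  have hx'c : ContinuousOn (fun s => (u s).2.2.1) (Ici t₀) :=
    (continuous_fst.comp (continuous_snd.comp continuous_snd)).comp_continuousOn hucont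
  have hl'c : ContinuousOn (fun s => (u s).2.2.2) (Ici t₀) :=
    (continuous_snd.comp (continuous_snd.comp continuous_snd)).comp_continuousOn hucont
  have hmaxc : Continuous fun t : ℝ => max t t₀ := continuous_id.max continuous_const
  have hne : ∀ t : ℝ, max t t₀ ≠ 0 := fun t => (lt_of_lt_of_le ht₀ (le_max_right _ _)).ne'
  have hdivc : Continuous fun t : ℝ => α / max t t₀ := continuous_const.div hmaxc hne
  have hθτc : Continuous fun t : ℝ => θ * max t t₀ := continuous_const.mul hmaxc
  refine ⟨fun t => (u t).1, fun t => (u t).2.1, fun t => (u t).2.2.1,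
    fun t => -((α / max t t₀) • (u t).2.2.1) - f' (u t).1
      - At ((u t).2.1 + (θ * max t t₀) • (u t).2.2.2) - β • At (A (u t).1 - b),
    fun t => (u t).2.2.2,
    fun t => -((α / max t t₀) • (u t).2.2.2)
      + (A ((u t).1 + (θ * max t t₀) • (u t).2.2.1) - b),
    ⟨fun t ht => hP1 t ht, fun t ht => hP3 t ht, ?_, fun t ht => hP2 t ht,
      fun t ht => hP4 t ht, ?_, ?_, ?_⟩, ?_, ?_, ?_, ?_, ?_⟩
  · -- continuity of x''
    refine ContinuousOn.sub (ContinuousOn.sub (ContinuousOn.sub ?_ ?_) ?_) ?_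
    · exact ((hdivc.continuousOn.smul hx'c)).neg
    · exact hlip.continuous.comp_continuousOn hxc
    · exact At.continuous.comp_continuousOn (hlc.add (hθτc.continuousOn.smul hl'c))
    · exact ContinuousOn.const_smul (At.continuous.comp_continuousOn
        ((A.continuous.comp_continuousOn hxc).sub continuousOn_const)) β
  · -- continuity of l''
    refine ContinuousOn.add ?_ ?_
    · exact ((hdivc.continuousOn.smul hl'c)).neg
    · exact (A.continuous.comp_continuousOn (hxc.add (hθτc.continuousOn.smul hx'c))).sub
        continuousOn_const
  · -- first equation
    intro t ht
    have hmx : max t t₀ = t := max_eq_left ht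
    simp only [hmx]
    abel
  · -- second equation
    intro t ht
    have hmx : max t t₀ = t := max_eq_left ht
    simp only [hmx]
    abel
  · show (u t₀).1 = x₀; rw [hu₀]
  · show (u t₀).2.1 = lam₀; rw [hu₀]
  · show (u t₀).2.2.1 = xd₀; rw [hu₀]
  · show (u t₀).2.2.2 = lamd₀; rw [hu₀]
  · -- uniqueness
    intro y m y' y'' m' m'' hS hy0 hm0 hy'0 hm'0 t ht
    obtain ⟨hSy, hSy', hScx, hSm, hSm', hScl, hSeq1, hSeq2⟩ := hS
    set w : ℝ → X × Y × X × Y := fun s => (y s, m s, y' s, m' s) with hw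
    have hwd : ∀ s ∈ Ici t₀, HasDerivAt w (F s (w s)) s := by
      intro s hs
      have hmx : max s t₀ = s := max_eq_left hs
      have h3 : y'' s = -((α / max s t₀) • y' s) - f' (y s)
          - At (m s + (θ * max s t₀) • m' s) - β • At (A (y s) - b) := by
        rw [hmx, ← sub_eq_zero]
        rw [show y'' s - (-((α / s) • y' s) - f' (y s) - At (m s + (θ * s) • m' s)
            - β • At (A (y s) - b))
            = y'' s + (α / s) • y' s + f' (y s) + At (m s + (θ * s) • m' s)
              + β • At (A (y s) - b) from by abel]
        exact hSeq1 s hs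
      have h4 : m'' s = -((α / max s t₀) • m' s)
          + (A (y s + (θ * max s t₀) • y' s) - b) := by
        rw [hmx, ← sub_eq_zero]
        rw [show m'' s - (-((α / s) • m' s) + (A (y s + (θ * s) • y' s) - b))
            = m'' s + (α / s) • m' s - (A (y s + (θ * s) • y' s) - b) from by abel]
        exact hSeq2 s hs
      have hD : HasDerivAt w (y' s, m' s, y'' s, m'' s) s :=
        (hSy s hs).prodMk ((hSm s hs).prodMk ((hSy' s hs).prodMk (hSm' s hs)))
      have hFw : F s (w s) = (y' s, m' s, y'' s, m'' s) := by
        rw [h3, h4]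
        rfl
      rw [hFw]
      exact hD
    obtain ⟨K, hK⟩ := hFlip t
    have hwcont : ContinuousOn w (Icc t₀ t) := fun s hs =>
      (hwd s hs.1).continuousAt.continuousWithinAt
    have hucont' : ContinuousOn u (Icc t₀ t) := fun s hs =>
      (hud s hs.1).continuousAt.continuousWithinAt
    have heqon : EqOn w u (Icc t₀ t) := by
      refine ODE_solution_unique (v := fun s => F (min s t)) (K := K)
        (fun s => hK _ (min_le_right s t)) hwcont ?_ hucont' ?_ ?_
      · intro s hs
        simp only [min_eq_left hs.2.le]
        exact (hwd s hs.1).hasDerivWithinAt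
      · intro s hs
        simp only [min_eq_left hs.2.le]
        exact (hud s hs.1).hasDerivWithinAt
      · rw [hu₀]
        show (y t₀, m t₀, y' t₀, m' t₀) = _
        rw [hy0, hm0, hy'0, hm'0]
    have hwt : w t = u t := heqon ⟨ht, le_rfl⟩
    exact ⟨congrArg Prod.fst hwt, congrArg (fun p => p.2.1) hwt⟩
end

section
/- Assume additionally that ∇f is ℓ-Lipschitz continuous for some ℓ > 0, that α > 3 and 1/2 > θ > 1/(α−1). Let (x,λ) be a solution of (PD-AVD) and (x*,λ*) a primal-dual optimal solution. Then for every t ≥ t₀: (α/t)·(d/dt)‖(ẋ(t),λ̇(t))‖² + θ·(d/dt)(t·‖A*(λ(t) − λ*)‖²) + (1 − θ)·‖A*(λ(t) − λ*)‖² + 2·⟨ẍ(t) + (α/t)ẋ(t), A*(λ(t) − λ*)⟩ ≤ 2‖∇f(x(t)) − ∇f(x*)‖² + (2β²‖A‖² + 1)·‖Ax(t) − b‖², where ‖A‖ is the operator norm of A. -/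
open Set MeasureTheory Filter Topology Asymptotics
open scoped RealInnerProductSpace ENNReal

set_option maxHeartbeats 1000000 in
theorem stmt11
    {X Y : Type*}
    [NormedAddCommGroup X] [InnerProductSpace ℝ X] [CompleteSpace X]
    [NormedAddCommGroup Y] [InnerProductSpace ℝ Y] [CompleteSpace Y]
    (f : X → ℝ) (f' : X → X) (A : X →L[ℝ] Y) (b : Y)
    (hconv : ConvexOn ℝ univ f)
    (hgrad : ∀ u, HasGradientAt f (f' u) u)
    (hf'cont : Continuous f')
    (ℓ : NNReal) (hℓ : 0 < ℓ) (hlip : LipschitzWith ℓ f')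
    (t₀ α β θ : ℝ) (ht₀ : 0 < t₀) (hα : 3 < α) (hβ : 0 ≤ β)
    (hθ1 : 1 / (α - 1) < θ) (hθ2 : θ < 1 / 2)
    (x : ℝ → X) (x' x'' : ℝ → X) (l : ℝ → Y) (l' l'' : ℝ → Y)
    (hx1 : ∀ t ∈ Ici t₀, HasDerivAt x (x' t) t)
    (hx2 : ∀ t ∈ Ici t₀, HasDerivAt x' (x'' t) t)
    (hx3 : ContinuousOn x'' (Ici t₀))
    (hl1 : ∀ t ∈ Ici t₀, HasDerivAt l (l' t) t)
    (hl2 : ∀ t ∈ Ici t₀, HasDerivAt l' (l'' t) t)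
    (hl3 : ContinuousOn l'' (Ici t₀))
    (hode1 : ∀ t ∈ Ici t₀, x'' t + (α / t) • x' t + f' (x t)
        + (ContinuousLinearMap.adjoint A) (l t + (θ * t) • l' t)
        + β • (ContinuousLinearMap.adjoint A) (A (x t) - b) = 0)
    (hode2 : ∀ t ∈ Ici t₀, l'' t + (α / t) • l' t
        - (A (x t + (θ * t) • x' t) - b) = 0)
    (xs : X) (ls : Y)
    (hopt1 : f' xs + (ContinuousLinearMap.adjoint A) ls = 0)
    (hopt2 : A xs = b)
    :
    ∀ t ∈ Ici t₀, ∃ du dw : ℝ,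
      HasDerivAt (fun s => ‖x' s‖ ^ 2 + ‖l' s‖ ^ 2) du t ∧
      HasDerivAt (fun s => s * ‖(ContinuousLinearMap.adjoint A) (l s - ls)‖ ^ 2) dw t ∧
      α / t * du + θ * dw
          + (1 - θ) * ‖(ContinuousLinearMap.adjoint A) (l t - ls)‖ ^ 2
          + 2 * ⟪x'' t + (α / t) • x' t,
              (ContinuousLinearMap.adjoint A) (l t - ls)⟫
        ≤ 2 * ‖f' (x t) - f' xs‖ ^ 2
          + (2 * β ^ 2 * ‖A‖ ^ 2 + 1) * ‖A (x t) - b‖ ^ 2 := by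
  intro t ht
  have ht0 : 0 < t := lt_of_lt_of_le ht₀ ht
  set B := ContinuousLinearMap.adjoint A with hB
  set c : ℝ := α / t with hc
  set v : X := B (l t - ls) with hv
  set w : Y := A (x t) - b with hw
  set p : X := f' (x t) - f' xs with hp
  set g : X := p + β • B w with hg
  -- derivative du
  have hdx := hx2 t ht
  have hdl := hl2 t ht
  have hdu : HasDerivAt (fun s => ‖x' s‖ ^ 2 + ‖l' s‖ ^ 2)
      ((⟪x' t, x'' t⟫ + ⟪x'' t, x' t⟫) + (⟪l' t, l'' t⟫ + ⟪l'' t, l' t⟫)) t := by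
    have h1 := hdx.inner ℝ hdx
    have h2 := hdl.inner ℝ hdl
    have := h1.add h2
    simp only [real_inner_self_eq_norm_sq] at this; exact this
  -- derivative dw
  have hF : HasDerivAt (fun s => B (l s - ls)) (B (l' t)) t := by
    have h1 : HasDerivAt (fun s => l s - ls) (l' t) t := (hl1 t ht).sub_const ls
    exact (B.hasFDerivAt.comp_hasDerivAt t h1)
  have hdw : HasDerivAt (fun s => s * ‖B (l s - ls)‖ ^ 2)
      (1 * ‖v‖ ^ 2 + t * (⟪v, B (l' t)⟫ + ⟪B (l' t), v⟫)) t := by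
    have h2 : HasDerivAt (fun s => ‖B (l s - ls)‖ ^ 2)
        (⟪v, B (l' t)⟫ + ⟪B (l' t), v⟫) t := by
      have := hF.inner ℝ hF
      simpa only [real_inner_self_eq_norm_sq, hv] using this
    exact (hasDerivAt_id t).mul h2
  refine ⟨_, _, hdu, hdw, ?_⟩
  -- rearranged ODEs
  have h0 := hode1 t ht
  rw [map_add, _root_.map_smul] at h0
  have h0b := hode2 t ht
  rw [map_add, _root_.map_smul] at h0b
  have hv' : v = B (l t) - B ls := by rw [hv, map_sub]
  have hsum : f' (x t) + B (l t) + β • B w = g + v := by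
    have : g + v = f' (x t) + B (l t) + β • B w - (f' xs + B ls) := by
      rw [hg, hp, hv']; abel
    rw [this, hopt1, sub_zero]
  -- scalar identities
  have F1 : ⟪x' t, x'' t⟫ = -(c * ‖x' t‖ ^ 2) - ⟪x' t, g⟫ - ⟪x' t, v⟫
      - θ * t * ⟪x' t, B (l' t)⟫ := by
    have h1 := congrArg (fun z => ⟪x' t, z⟫) h0
    have h2 := congrArg (fun z => ⟪x' t, z⟫) hsum
    simp only [inner_add_right, real_inner_smul_right, inner_zero_right,
      real_inner_self_eq_norm_sq] at h1 h2
    linarith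
  have F2 : ⟪l' t, l'' t⟫ = -(c * ‖l' t‖ ^ 2) + ⟪l' t, w⟫
      + θ * t * ⟪l' t, A (x' t)⟫ := by
    have h1 := congrArg (fun z => ⟪l' t, z⟫) h0b
    simp only [inner_add_right, inner_sub_right, real_inner_smul_right, inner_zero_right,
      real_inner_self_eq_norm_sq] at h1
    have h2 : ⟪l' t, w⟫ = ⟪l' t, A (x t)⟫ - ⟪l' t, b⟫ := by
      rw [hw, inner_sub_right]
    linarith
  have F3 : ⟪x'' t + c • x' t, v⟫ = -⟪g, v⟫ - ‖v‖ ^ 2 - θ * t * ⟪B (l' t), v⟫ := by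
    have h1 := congrArg (fun z => ⟪z, v⟫) h0
    have h2 := congrArg (fun z => ⟪z, v⟫) hsum
    simp only [inner_add_left, real_inner_smul_left, inner_zero_left,
      real_inner_self_eq_norm_sq] at h1 h2
    rw [inner_add_left, real_inner_smul_left]
    linarith
  have Fadj : ⟪x' t, B (l' t)⟫ = ⟪l' t, A (x' t)⟫ := by
    rw [hB, ContinuousLinearMap.adjoint_inner_right, real_inner_comm]
  have Fcomm1 : ⟪x'' t, x' t⟫ = ⟪x' t, x'' t⟫ := real_inner_comm _ _
  have Fcomm2 : ⟪l'' t, l' t⟫ = ⟪l' t, l'' t⟫ := real_inner_comm _ _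
  have Fcomm3 : ⟪v, B (l' t)⟫ = ⟪B (l' t), v⟫ := real_inner_comm _ _
  -- square expansions
  have S1 : (0:ℝ) ≤ c ^ 2 * ‖x' t‖ ^ 2 + 2 * c * (⟪x' t, g⟫ + ⟪x' t, v⟫)
      + (‖g‖ ^ 2 + 2 * ⟪g, v⟫ + ‖v‖ ^ 2) := by
    have h1 : ‖c • x' t + (g + v)‖ ^ 2
        = ‖c • x' t‖ ^ 2 + 2 * ⟪c • x' t, g + v⟫ + ‖g + v‖ ^ 2 :=
      norm_add_sq_real _ _
    have h2 : ‖g + v‖ ^ 2 = ‖g‖ ^ 2 + 2 * ⟪g, v⟫ + ‖v‖ ^ 2 := norm_add_sq_real _ _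
    have h3 : ‖c • x' t‖ ^ 2 = c ^ 2 * ‖x' t‖ ^ 2 := by
      rw [norm_smul, mul_pow, Real.norm_eq_abs, sq_abs]
    have h4 : ⟪c • x' t, g + v⟫ = c * (⟪x' t, g⟫ + ⟪x' t, v⟫) := by
      rw [real_inner_smul_left, inner_add_right]
    nlinarith [sq_nonneg (‖c • x' t + (g + v)‖)]
  have S2 : (0:ℝ) ≤ c ^ 2 * ‖l' t‖ ^ 2 - 2 * c * ⟪l' t, w⟫ + ‖w‖ ^ 2 := by
    have h1 : ‖c • l' t - w‖ ^ 2 = ‖c • l' t‖ ^ 2 - 2 * ⟪c • l' t, w⟫ + ‖w‖ ^ 2 :=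
      norm_sub_sq_real _ _
    have h3 : ‖c • l' t‖ ^ 2 = c ^ 2 * ‖l' t‖ ^ 2 := by
      rw [norm_smul, mul_pow, Real.norm_eq_abs, sq_abs]
    have h4 : ⟪c • l' t, w⟫ = c * ⟪l' t, w⟫ := real_inner_smul_left _ _ _
    nlinarith [sq_nonneg (‖c • l' t - w‖)]
  -- bound on ‖g‖
  have hgb : ‖g‖ ≤ ‖p‖ + β * (‖A‖ * ‖w‖) := by
    refine (norm_add_le _ _).trans ?_
    gcongr
    rw [norm_smul, Real.norm_eq_abs, abs_of_nonneg hβ]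
    gcongr
    calc ‖B w‖ ≤ ‖B‖ * ‖w‖ := B.le_opNorm w
    _ = ‖A‖ * ‖w‖ := by rw [hB, ContinuousLinearMap.adjoint.norm_map]
  have hg2 : ‖g‖ ^ 2 ≤ 2 * ‖p‖ ^ 2 + 2 * β ^ 2 * ‖A‖ ^ 2 * ‖w‖ ^ 2 := by
    nlinarith [sq_nonneg (‖p‖ - β * (‖A‖ * ‖w‖)), norm_nonneg g, norm_nonneg p,
      mul_nonneg hβ (mul_nonneg (norm_nonneg A) (norm_nonneg w)),
      sq_nonneg (‖g‖)]
  -- finish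
  have hgoal2 : ⟪x'' t + (α / t) • x' t, v⟫ = ⟪x'' t + c • x' t, v⟫ := by rw [hc]
  rw [hgoal2]
  have key : c * ((⟪x' t, x'' t⟫ + ⟪x'' t, x' t⟫) + (⟪l' t, l'' t⟫ + ⟪l'' t, l' t⟫))
      + θ * (1 * ‖v‖ ^ 2 + t * (⟪v, B (l' t)⟫ + ⟪B (l' t), v⟫))
      + (1 - θ) * ‖v‖ ^ 2 + 2 * ⟪x'' t + c • x' t, v⟫
      = -(2 * c ^ 2 * (‖x' t‖ ^ 2 + ‖l' t‖ ^ 2))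
        - 2 * c * (⟪x' t, g⟫ + ⟪x' t, v⟫) + 2 * c * ⟪l' t, w⟫
        - ‖v‖ ^ 2 - 2 * ⟪g, v⟫ := by
    rw [Fcomm1, Fcomm2, Fcomm3, F1, F2, F3, Fadj]; ring
  have hA1 : (0:ℝ) ≤ c ^ 2 * ‖x' t‖ ^ 2 := by positivity
  have hA2 : (0:ℝ) ≤ c ^ 2 * ‖l' t‖ ^ 2 := by positivity
  linarith [key, S1, S2, hg2, hA1, hA2]
end

section
/- Let δ > 0, 1 ≤ p < ∞ and 1 ≤ q ≤ ∞. Suppose F : [δ,∞) → [0,∞) is a locally absolutely continuous nonnegative function with F ∈ L^p([δ,∞)), that G ∈ L^q([δ,∞)), and that F'(t) ≤ G(t) for almost every t ≥ δ. Then lim_{t→∞} F(t) = 0. -/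
open Set MeasureTheory Filter Topology
open scoped ENNReal

/-- Auxiliary: if `G ∈ L^q([δ,∞))` with `q ≥ 1`, then the integral of `|G|` over short
subintervals of `[δ,∞)` is uniformly small. -/
lemma aux_small16 {δ ε : ℝ} (hε : 0 < ε) {q : ℝ≥0∞} (hq1 : 1 ≤ q) {G : ℝ → ℝ}
    (hGq : MemLp G q (volume.restrict (Ici δ))) :
    ∃ η > (0:ℝ), ∀ s t : ℝ, δ ≤ s → s ≤ t → t - s ≤ η →
      ∫ x in Icc s t, |G x| ≤ ε := by
  have hInter : ∀ s t : ℝ, δ ≤ s → Icc s t ∩ Ici δ = Icc s t := by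
    intro s t hs
    exact inter_eq_self_of_subset_left (fun x (hx : x ∈ Icc s t) => hs.trans hx.1)
  have hrest : ∀ s t : ℝ, δ ≤ s →
      (volume.restrict (Ici δ)).restrict (Icc s t) = volume.restrict (Icc s t) := by
    intro s t hs
    rw [Measure.restrict_restrict measurableSet_Icc, hInter s t hs]
  have hmeasA : ∀ s t : ℝ, δ ≤ s → AEStronglyMeasurable G (volume.restrict (Icc s t)) := by
    intro s t hs
    have := hGq.1.restrict (s := Icc s t)
    rwa [hrest s t hs] at this
  have habs : ∀ s t : ℝ, δ ≤ s → s ≤ t →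
      ∫ x in Icc s t, |G x| = (eLpNorm G 1 (volume.restrict (Icc s t))).toReal := by
    intro s t hs hst
    rw [eLpNorm_one_eq_lintegral_enorm, ← integral_norm_eq_lintegral_enorm (hmeasA s t hs)]
    simp only [Real.norm_eq_abs]
  by_cases hqt : q = ∞
  · -- bounded case
    subst hqt
    set K := eLpNorm G ∞ (volume.restrict (Ici δ)) with hK
    have hKne : K ≠ ∞ := hGq.2.ne
    have hKpos : (0:ℝ) < K.toReal + 1 := by positivity
    have hexp : 1/(1:ℝ≥0∞).toReal - 1/(⊤:ℝ≥0∞).toReal = (1:ℝ) := by norm_num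
    refine ⟨ε / (K.toReal + 1), by positivity, fun s t hs hst hts => ?_⟩
    rw [habs s t hs hst]
    have h1 : eLpNorm G 1 (volume.restrict (Icc s t)) ≤ K * ENNReal.ofReal (t - s) := by
      calc eLpNorm G 1 (volume.restrict (Icc s t))
          ≤ eLpNorm G ∞ (volume.restrict (Icc s t)) *
            ((volume.restrict (Icc s t)) univ) ^ (1/(1:ℝ≥0∞).toReal - 1/(⊤:ℝ≥0∞).toReal) :=
            eLpNorm_le_eLpNorm_mul_rpow_measure_univ le_top (hmeasA s t hs)
        _ ≤ K * ENNReal.ofReal (t - s) := by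
            rw [Measure.restrict_apply_univ, Real.volume_Icc, hexp, ENNReal.rpow_one]
            gcongr
            calc eLpNorm G ∞ (volume.restrict (Icc s t))
                = eLpNorm G ∞ ((volume.restrict (Ici δ)).restrict (Icc s t)) := by
                  rw [hrest s t hs]
              _ ≤ K := eLpNorm_mono_measure _ Measure.restrict_le_self
    have h2 : (eLpNorm G 1 (volume.restrict (Icc s t))).toReal
        ≤ (K * ENNReal.ofReal (t - s)).toReal :=
      ENNReal.toReal_mono (ENNReal.mul_ne_top hKne ENNReal.ofReal_ne_top) h1
    refine h2.trans ?_
    rw [ENNReal.toReal_mul, ENNReal.toReal_ofReal (by linarith)]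
    calc K.toReal * (t - s) ≤ (K.toReal + 1) * (ε / (K.toReal + 1)) := by
          apply mul_le_mul (by linarith) hts (by linarith) (by positivity)
      _ = ε := by field_simp
  · -- q < ∞ : absolute continuity of the indicator norm
    obtain ⟨η0, hη0, hind⟩ := hGq.eLpNorm_indicator_le hq1 hqt hε
    refine ⟨min η0 1, lt_min hη0 one_pos, fun s t hs hst hts => ?_⟩
    rw [habs s t hs hst]
    have hμA : (volume.restrict (Ici δ)) (Icc s t) = ENNReal.ofReal (t - s) := by
      rw [Measure.restrict_apply measurableSet_Icc, hInter s t hs, Real.volume_Icc]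
    have hμA1 : (volume.restrict (Ici δ)) (Icc s t) ≤ ENNReal.ofReal η0 := by
      rw [hμA]; exact ENNReal.ofReal_le_ofReal (hts.trans (min_le_left _ _))
    have hindA := hind (Icc s t) measurableSet_Icc hμA1
    have h2 : eLpNorm G q (volume.restrict (Icc s t))
        = eLpNorm ((Icc s t).indicator G) q (volume.restrict (Ici δ)) := by
      rw [eLpNorm_indicator_eq_eLpNorm_restrict measurableSet_Icc, hrest s t hs]
    have hqr : 1 ≤ q.toReal := by
      have := ENNReal.toReal_mono hqt hq1
      simpa using this
    have h3 : ((volume.restrict (Icc s t)) univ) ^ (1/(1:ℝ≥0∞).toReal - 1/q.toReal) ≤ 1 := by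
      apply ENNReal.rpow_le_one
      · rw [Measure.restrict_apply_univ, Real.volume_Icc]
        calc ENNReal.ofReal (t - s) ≤ ENNReal.ofReal 1 :=
              ENNReal.ofReal_le_ofReal (hts.trans (min_le_right _ _))
          _ = 1 := ENNReal.ofReal_one
      · simp only [ENNReal.toReal_one]
        have h4 : 1 / q.toReal ≤ 1 := by
          rw [div_le_one (by linarith)]; exact hqr
        linarith
    have h1 : eLpNorm G 1 (volume.restrict (Icc s t)) ≤ ENNReal.ofReal ε := by
      calc eLpNorm G 1 (volume.restrict (Icc s t))
          ≤ eLpNorm G q (volume.restrict (Icc s t)) *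
            ((volume.restrict (Icc s t)) univ) ^ (1/(1:ℝ≥0∞).toReal - 1/q.toReal) :=
            eLpNorm_le_eLpNorm_mul_rpow_measure_univ hq1 (hmeasA s t hs)
        _ ≤ ENNReal.ofReal ε * 1 := by
            rw [h2]; exact mul_le_mul' hindA h3
        _ = ENNReal.ofReal ε := mul_one _
    exact ENNReal.toReal_le_of_le_ofReal hε.le h1

theorem stmt16 (δ : ℝ) (hδ : 0 < δ) (p q : ℝ≥0∞)
    (hp1 : 1 ≤ p) (hp2 : p ≠ ⊤) (hq1 : 1 ≤ q)
    (F G F' : ℝ → ℝ)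
    (hFnonneg : ∀ t ∈ Ici δ, 0 ≤ F t)
    -- `F` is locally absolutely continuous on `[δ,∞)` with a.e. derivative `F'`:
    -- it is the integral of the locally integrable function `F'`
    (hFac : ∀ t ∈ Ici δ, IntervalIntegrable F' volume δ t ∧
      F t = F δ + ∫ s in δ..t, F' s)
    (hF'le : ∀ᵐ t ∂(volume.restrict (Ici δ)), F' t ≤ G t)
    (hFp : MemLp F p (volume.restrict (Ici δ)))
    (hGq : MemLp G q (volume.restrict (Ici δ))) :
    Tendsto F atTop (nhds 0) := by
  by_contra hcon
  rw [Metric.tendsto_atTop] at hcon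
  push_neg at hcon
  obtain ⟨ε, hε, hfreq⟩ := hcon
  obtain ⟨η, hη, hkey⟩ := aux_small16 (half_pos hε) hq1 hGq
  -- integrability of G on compact subintervals
  have hGInt : ∀ s t : ℝ, δ ≤ s → IntegrableOn G (Icc s t) volume := by
    intro s t hs
    have hInter : Icc s t ∩ Ici δ = Icc s t :=
      inter_eq_self_of_subset_left (fun x (hx : x ∈ Icc s t) => hs.trans hx.1)
    have hm : MemLp G q (volume.restrict (Icc s t)) := by
      have := hGq.restrict (Icc s t)
      rwa [Measure.restrict_restrict measurableSet_Icc, hInter] at this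
    haveI : IsFiniteMeasure (volume.restrict (Icc s t)) :=
      ⟨by rw [Measure.restrict_apply_univ]; exact measure_Icc_lt_top⟩
    exact memLp_one_iff_integrable.mp (hm.mono_exponent hq1)
  -- fundamental bound: F t - F s ≤ ∫_{[s,t]} |G|
  have hFbound : ∀ s t : ℝ, δ ≤ s → s ≤ t → F t - F s ≤ ∫ x in Icc s t, |G x| := by
    intro s t hs hst
    have hδt : δ ≤ t := hs.trans hst
    obtain ⟨hIs, hFs⟩ := hFac s hs
    obtain ⟨hIt, hFt⟩ := hFac t hδt
    have hII : IntervalIntegrable F' volume s t := hIs.symm.trans hIt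
    have heq : F t - F s = ∫ x in s..t, F' x := by
      have hadd := intervalIntegral.integral_add_adjacent_intervals hIs hII
      rw [hFt, hFs]; linarith
    have hGI : IntegrableOn G (Ioc s t) volume :=
      (hGInt s t hs).mono_set Ioc_subset_Icc_self
    have hF'I : IntegrableOn F' (Ioc s t) volume :=
      (intervalIntegrable_iff_integrableOn_Ioc_of_le hst).mp hII
    have hae : ∀ᵐ x ∂(volume.restrict (Ioc s t)), F' x ≤ G x :=
      ae_restrict_of_ae_restrict_of_subset (fun x hx => hs.trans hx.1.le) hF'le
    calc F t - F s = ∫ x in s..t, F' x := heq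
      _ = ∫ x in Ioc s t, F' x := intervalIntegral.integral_of_le hst
      _ ≤ ∫ x in Ioc s t, G x := setIntegral_mono_ae_restrict hF'I hGI hae
      _ ≤ ∫ x in Ioc s t, |G x| := setIntegral_mono hGI hGI.abs fun x => le_abs_self _
      _ = ∫ x in Icc s t, |G x| := (integral_Icc_eq_integral_Ioc).symm
  -- F stays above ε/2 shortly before a large value
  have hlow : ∀ t x : ℝ, δ + η ≤ t → ε ≤ F t → x ∈ Icc (t - η) t → ε / 2 ≤ F x := by
    intro t x ht hFt hx
    have hδx : δ ≤ x := by linarith [hx.1]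
    have hb := hFbound x t hδx hx.2
    have hk := hkey x t hδx hx.2 (by linarith [hx.1])
    linarith
  -- Lp data
  have hp0 : p ≠ 0 := (lt_of_lt_of_le zero_lt_one hp1).ne'
  have hptr : 0 < p.toReal := ENNReal.toReal_pos hp0 hp2
  set f : ℝ → ℝ := fun x => |F x| ^ p.toReal with hf
  have hfint : Integrable f (volume.restrict (Ici δ)) := by
    have := hFp.integrable_norm_rpow hp0 hp2
    simpa [hf, Real.norm_eq_abs] using this
  have hfIoi : IntegrableOn f (Ioi δ) volume := by
    have h : IntegrableOn f (Ici δ) volume := hfint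
    exact h.mono_set Ioi_subset_Ici_self
  have hfnn : ∀ x, 0 ≤ f x := fun x => Real.rpow_nonneg (abs_nonneg _) _
  set I := ∫ x in Ioi δ, f x with hI
  have htends : Tendsto (fun b => ∫ x in δ..b, f x) atTop (nhds I) :=
    intervalIntegral_tendsto_integral_Ioi δ hfIoi tendsto_id
  set c := η * (ε / 2) ^ p.toReal with hc
  have hcpos : 0 < c := mul_pos hη (Real.rpow_pos_of_pos (half_pos hε) _)
  have hev : ∀ᶠ b in atTop, I - c / 2 < ∫ x in δ..b, f x :=
    htends.eventually (lt_mem_nhds (by linarith))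
  rw [eventually_atTop] at hev
  obtain ⟨M, hM⟩ := hev
  -- pick a large point where F is big
  obtain ⟨t, ht, hdist⟩ := hfreq (max M δ + η + 1)
  have hδt : δ ≤ t := by
    have := le_max_right M δ; linarith
  have hMt : M + 1 ≤ t - η := by
    have := le_max_left M δ; linarith
  have hδtη : δ ≤ t - η := by
    have := le_max_right M δ; linarith
  have hFtε : ε ≤ F t := by
    rw [Real.dist_eq, sub_zero, abs_of_nonneg (hFnonneg t hδt)] at hdist
    exact hdist
  have hbig : ∀ x ∈ Icc (t - η) t, ε / 2 ≤ F x :=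
    fun x hx => hlow t x (by linarith) hFtε hx
  -- the interval integral of f over [t-η, t] is at least c
  have hint2 : IntervalIntegrable f volume (t - η) t := by
    rw [intervalIntegrable_iff_integrableOn_Ioc_of_le (by linarith)]
    exact hfIoi.mono_set fun x hx => lt_of_le_of_lt hδtη hx.1
  have hint1 : IntervalIntegrable f volume δ (t - η) := by
    rw [intervalIntegrable_iff_integrableOn_Ioc_of_le hδtη]
    exact hfIoi.mono_set fun x hx => hx.1
  have h2 : c ≤ ∫ x in (t - η)..t, f x := by
    have hmono : ∫ x in (t - η)..t, ((ε / 2) ^ p.toReal : ℝ) ≤ ∫ x in (t - η)..t, f x := by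
      apply intervalIntegral.integral_mono_on (by linarith) intervalIntegrable_const hint2
      intro x hx
      have hFx := hbig x hx
      show (ε / 2) ^ p.toReal ≤ |F x| ^ p.toReal
      rw [abs_of_nonneg (le_trans (half_pos hε).le hFx)]
      exact Real.rpow_le_rpow (half_pos hε).le hFx hptr.le
    have hconst : ∫ x in (t - η)..t, ((ε / 2) ^ p.toReal : ℝ) = c := by
      rw [intervalIntegral.integral_const, smul_eq_mul, hc]
      ring
    linarith
  have h3 : (∫ x in δ..(t - η), f x) + ∫ x in (t - η)..t, f x = ∫ x in δ..t, f x :=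
    intervalIntegral.integral_add_adjacent_intervals hint1 hint2
  have h4 : I - c / 2 < ∫ x in δ..(t - η), f x := hM (t - η) (by linarith)
  have h5 : ∫ x in δ..t, f x ≤ I := by
    rw [intervalIntegral.integral_of_le hδt, hI]
    exact setIntegral_mono_set hfIoi (ae_of_all _ hfnn)
      (HasSubset.Subset.eventuallyLE Ioc_subset_Ioi_self)
  linarith
end

section
/- Let X and Y be real Hilbert spaces, f : X → ℝ a convex continuously differentiable function whose gradient ∇f is ℓ-Lipschitz continuous for some ℓ > 0, A : X → Y a continuous linear operator with adjoint A*, and b ∈ Y. If (x*,λ*) and (x**,λ**) are both primal-dual optimal solutions, i.e. ∇f(x*) + A*λ* = 0, Ax* = b, ∇f(x**) + A*λ** = 0 and Ax** = b, then ∇f(x*) = ∇f(x**) and A*λ* = A*λ**. -/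
open Set
open scoped RealInnerProductSpace

/-- Directional derivative of `f` along `t ↦ x + t • w` from a gradient. -/
private lemma hasDerivAt_line
    {X : Type*} [NormedAddCommGroup X] [InnerProductSpace ℝ X] [CompleteSpace X]
    (f : X → ℝ) (f' : X → X) (hgrad : ∀ u, HasGradientAt f (f' u) u)
    (x w : X) (t : ℝ) :
    HasDerivAt (fun s : ℝ => f (x + s • w)) ⟪f' (x + t • w), w⟫ t := by
  have hline : HasDerivAt (fun s : ℝ => x + s • w) w t := by
    simpa using ((hasDerivAt_id t).smul_const w).const_add x
  have hf := (hgrad (x + t • w)).hasFDerivAt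
  have := hf.comp_hasDerivAt t hline
  simp at this; exact this

/-- The gradient inequality for a convex differentiable function. -/
private lemma grad_ineq
    {X : Type*} [NormedAddCommGroup X] [InnerProductSpace ℝ X] [CompleteSpace X]
    (f : X → ℝ) (f' : X → X)
    (hconv : ConvexOn ℝ univ f)
    (hgrad : ∀ u, HasGradientAt f (f' u) u)
    (x y : X) : f x + ⟪f' x, y - x⟫ ≤ f y := by
  set φ : ℝ → ℝ := fun t => f (x + t • (y - x)) with hφ
  have hφconv : ConvexOn ℝ univ φ := by
    have := hconv.comp_affineMap
      (AffineMap.lineMap x y : ℝ →ᵃ[ℝ] X)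
    have h2 : (fun t : ℝ => f (AffineMap.lineMap x y t)) = φ := by
      funext t
      simp [hφ, AffineMap.lineMap_apply, add_comm]
    rw [← h2]; simp [Function.comp] at this; exact this
  have hderiv : HasDerivAt φ ⟪f' x, y - x⟫ 0 := by
    have := hasDerivAt_line f f' hgrad x (y - x) 0
    simpa [hφ] using this
  have hslope := hφconv.le_slope_of_hasDerivAt (mem_univ (0:ℝ)) (mem_univ (1:ℝ))
    (by norm_num) hderiv
  have : ⟪f' x, y - x⟫ ≤ φ 1 - φ 0 := by
    simpa [slope_def_field] using hslope
  have h0 : φ 0 = f x := by simp [hφ]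
  have h1 : φ 1 = f y := by simp [hφ]
  rw [h0, h1] at this
  linarith

theorem stmt17
    {X Y : Type*}
    [NormedAddCommGroup X] [InnerProductSpace ℝ X] [CompleteSpace X]
    [NormedAddCommGroup Y] [InnerProductSpace ℝ Y] [CompleteSpace Y]
    (f : X → ℝ) (f' : X → X) (A : X →L[ℝ] Y) (b : Y)
    (hconv : ConvexOn ℝ univ f)
    (hgrad : ∀ u, HasGradientAt f (f' u) u)
    (ℓ : NNReal) (hℓ : 0 < ℓ) (hlip : LipschitzWith ℓ f')
    (xs xss : X) (ls lss : Y)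
    (hopt1 : f' xs + (ContinuousLinearMap.adjoint A) ls = 0) (hopt2 : A xs = b)
    (hopt1' : f' xss + (ContinuousLinearMap.adjoint A) lss = 0) (hopt2' : A xss = b) :
    f' xs = f' xss ∧
    (ContinuousLinearMap.adjoint A) ls = (ContinuousLinearMap.adjoint A) lss := by
  have hg : f' xs = -(ContinuousLinearMap.adjoint A) ls := by
    rw [eq_neg_iff_add_eq_zero]; exact hopt1
  have hh : f' xss = -(ContinuousLinearMap.adjoint A) lss := by
    rw [eq_neg_iff_add_eq_zero]; exact hopt1'
  -- ⟪f' xs - f' xss, xs - xss⟫ = 0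
  have horth : ⟪f' xs - f' xss, xs - xss⟫ = 0 := by
    rw [hg, hh]
    have : -(ContinuousLinearMap.adjoint A) ls - -(ContinuousLinearMap.adjoint A) lss
        = (ContinuousLinearMap.adjoint A) (lss - ls) := by
      rw [map_sub]; abel
    rw [this, ContinuousLinearMap.adjoint_inner_left, map_sub, hopt2, hopt2', sub_self,
      inner_zero_right]
  have ineq1 := grad_ineq f f' hconv hgrad xs xss
  have ineq2 := grad_ineq f f' hconv hgrad xss xs
  have hsum : ⟪f' xs, xss - xs⟫ + ⟪f' xss, xs - xss⟫ = 0 := by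
    have h1 : ⟪f' xs - f' xss, xs - xss⟫
        = ⟪f' xs, xs - xss⟫ - ⟪f' xss, xs - xss⟫ := inner_sub_left _ _ _
    have h2 : ⟪f' xs, xss - xs⟫ = -⟪f' xs, xs - xss⟫ := by
      rw [← inner_neg_right]; congr 1; abel
    rw [h1] at horth; rw [h2]; linarith
  -- so both gradient inequalities are equalities
  have heq2 : f xs = f xss + ⟪f' xss, xs - xss⟫ := by linarith
  -- for any w : f (xs + t • w) ≥ f xs + t * ⟪f' xss, w⟫
  set w : X := f' xs - f' xss with hw
  have hlow : ∀ t : ℝ, f xs + t * ⟪f' xss, w⟫ ≤ f (xs + t • w) := by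
    intro t
    have := grad_ineq f f' hconv hgrad xss (xs + t • w)
    have harg : xs + t • w - xss = (xs - xss) + t • w := by abel
    rw [harg, inner_add_right, real_inner_smul_right] at this
    linarith
  -- ψ t = f (xs + t • w) - f xs - t * ⟪f' xss, w⟫ has a global min at 0
  have hψderiv : HasDerivAt (fun t : ℝ => f (xs + t • w) - f xs - t * ⟪f' xss, w⟫)
      (⟪f' xs, w⟫ - ⟪f' xss, w⟫) 0 := by
    have h1 : HasDerivAt (fun t : ℝ => f (xs + t • w)) ⟪f' xs, w⟫ 0 := by
      have := hasDerivAt_line f f' hgrad xs w 0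
      simpa using this
    have h2 : HasDerivAt (fun t : ℝ => f xs + t * ⟪f' xss, w⟫) ⟪f' xss, w⟫ 0 := by
      simpa using ((hasDerivAt_id (0:ℝ)).mul_const ⟪f' xss, w⟫).const_add (f xs)
    have := h1.sub h2
    simp only [sub_sub]; exact this
  have hmin : IsLocalMin (fun t : ℝ => f (xs + t • w) - f xs - t * ⟪f' xss, w⟫) 0 := by
    apply Filter.Eventually.of_forall
    intro t
    have := hlow t
    simp only
    have h0 : f (xs + (0:ℝ) • w) - f xs - (0:ℝ) * ⟪f' xss, w⟫ = 0 := by simp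
    rw [h0]
    linarith
  have hz : ⟪f' xs, w⟫ - ⟪f' xss, w⟫ = 0 := by
    have := hmin.hasDerivAt_eq_zero hψderiv
    exact this
  have hw0 : w = 0 := by
    have : ⟪w, w⟫ = 0 := by
      rw [hw, inner_sub_left]; exact hz
    exact inner_self_eq_zero.mp this
  have hfeq : f' xs = f' xss := by
    have := sub_eq_zero.mp hw0
    exact this
  refine ⟨hfeq, ?_⟩
  have : -(ContinuousLinearMap.adjoint A) ls = -(ContinuousLinearMap.adjoint A) lss := by
    rw [← hg, ← hh, hfeq]
  exact neg_injective this
end
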